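/- arXiv:2209.11768 — 5 statements merged into one kernel-verified Lean document; each statement's English description precedes it below -/
import Mathlib

section
/- Suppose that for every ε > 0 there exists a constant C > 0 such that for all real x ≥ 2 and all real y, |∑_{n ≤ x} Λ(n) n^{-iy} − x^{1−iy}/(1−iy)| ≤ C · x^{1/2} · (x+|y|)^ε. Then the Riemann Hypothesis is true. -/
open Finset

/-- The Riemann Hypothesis: every zero of the Riemann zeta function with real
part strictly between 0 and 1 has real part 1/2. -/
def RH : Prop :=
  ∀ s : ℂ, riemannZeta s = 0 → 0 < s.re → s.re < 1 → s.re = 1 / 2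

noncomputable section RHAux

namespace RHAux

open Complex MeasureTheory Set Filter Asymptotics Topology Real
open scoped ArithmeticFunction

/-- `1 - iγ` -/
def w (γ : ℝ) : ℂ := 1 - (γ : ℝ) * Complex.I

def c (γ : ℝ) : ℕ → ℂ := fun n =>
  (ArithmeticFunction.vonMangoldt n : ℂ) * (n : ℂ) ^ (-(γ : ℂ) * Complex.I)

def S (γ : ℝ) (x : ℝ) : ℂ := ∑ k ∈ Finset.Icc 0 ⌊x⌋₊, c γ k

def g (γ : ℝ) (x : ℝ) : ℂ := S γ x - (x : ℂ) ^ (w γ) / (w γ)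

def G (γ : ℝ) : ℝ → ℂ := (Set.Ici (1:ℝ)).indicator (g γ)

def F (γ : ℝ) : ℂ → ℂ := fun z =>
  z * mellin (G γ) (-z) + z / (w γ * (z - w γ))

lemma w_re (γ : ℝ) : (w γ).re = 1 := by simp [w]

lemma c_one (γ : ℝ) : c γ 1 = 0 := by
  simp [c, ArithmeticFunction.vonMangoldt_apply_one]

lemma c_zero (γ : ℝ) : c γ 0 = 0 := by simp [c]

lemma S_eq (γ : ℝ) (x : ℝ) : S γ x = ∑ n ∈ Finset.Icc 1 ⌊x⌋₊,
    (ArithmeticFunction.vonMangoldt n : ℂ) * (n : ℂ) ^ (-(γ : ℂ) * Complex.I) := by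
  rw [S, Finset.Icc_eq_cons_Ioc (Nat.zero_le _), Finset.sum_cons, c_zero, zero_add,
    ← Finset.Icc_add_one_left_eq_Ioc]
  rfl

lemma meas_S (γ : ℝ) : Measurable (S γ) :=
  (measurable_from_nat (f := fun n => ∑ k ∈ Finset.Icc 0 n, c γ k)).comp Nat.measurable_floor

lemma contOn_cpow (γ : ℝ) (z : ℂ) : ContinuousOn (fun x : ℝ => (x : ℂ) ^ z) (Set.Ici 1) :=
  fun x hx => (Complex.continuousAt_ofReal_cpow_const x z
    (Or.inr (by simp at hx; positivity))).continuousWithinAt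

lemma aesm_g (γ : ℝ) : AEStronglyMeasurable (g γ) (volume.restrict (Set.Ici 1)) := by
  refine AEStronglyMeasurable.sub ((meas_S γ).aestronglyMeasurable) ?_
  exact (((contOn_cpow γ (w γ)).div_const _).aestronglyMeasurable measurableSet_Ici)

lemma aesm_G (γ : ℝ) : AEStronglyMeasurable (G γ) volume := by
  rw [G, aestronglyMeasurable_indicator_iff measurableSet_Ici]
  exact aesm_g γ

lemma hasDerivAt_cpow_neg {s : ℂ} (hs : s ≠ 0) {t : ℝ} (ht : t ≠ 0) :
    HasDerivAt (fun y : ℝ => (y : ℂ) ^ (-s)) (-s * (t : ℂ) ^ (-s - 1)) t := by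
  have hr : -s - 1 ≠ -1 := by
    intro hh
    apply hs
    have : -s = 0 := by linear_combination hh
    simpa using this
  have h := (hasDerivAt_ofReal_cpow_const' ht hr).const_mul (-s)
  have heq : (fun y : ℝ => (y : ℂ) ^ (-s)) =
      fun y : ℝ => -s * ((y : ℂ) ^ (-s - 1 + 1) / (-s - 1 + 1)) := by
    funext y
    rw [show -s - 1 + 1 = -s by ring]
    field_simp
  rw [heq]
  convert h using 1

lemma S_eq_g_add (γ : ℝ) (x : ℝ) : S γ x = g γ x + (x : ℂ) ^ (w γ) / (w γ) := by
  rw [g]; ring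

section KeyS
variable {γ e A : ℝ}

lemma key (he : 1/2 < e) (he1 : e < 1) (hA : 0 < A)
    (hbd : ∀ x : ℝ, 1 ≤ x → ‖g γ x‖ ≤ A * x ^ e) {s : ℂ} (hs : 1 < s.re) :
    LSeries (fun n => (ArithmeticFunction.vonMangoldt n : ℂ)) (s + (γ : ℂ) * Complex.I)
      = F γ s := by
  have he0 : (0:ℝ) < e := by linarith
  have hs0 : s ≠ 0 := by
    intro h; rw [h] at hs; simp at hs; linarith
  have hsw : s - w γ ≠ 0 := by
    intro h
    have : s = w γ := by linear_combination h
    rw [this] at hs; rw [w_re] at hs; linarith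
  have hw0 : w γ ≠ 0 := by
    intro h
    have := w_re γ; rw [h] at this; simp at this
  -- the integrand
  set φ : ℝ → ℂ := fun t => -s * (t : ℂ) ^ (-s - 1) * S γ t with hφ
  -- Abel summation identity
  have abel : ∀ n : ℕ, ∑ k ∈ Finset.Icc 0 ⌊(n:ℝ)⌋₊, ((k:ℝ) : ℂ) ^ (-s) * c γ k
      = ((n:ℝ) : ℂ) ^ (-s) * S γ (n:ℝ) - ∫ t in Set.Ioc (1:ℝ) (n:ℝ), φ t := by
    intro n
    have hdiff : ∀ t ∈ Set.Icc (1:ℝ) (n:ℝ), DifferentiableAt ℝ (fun y : ℝ => (y : ℂ) ^ (-s)) t :=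
      fun t htt => (hasDerivAt_cpow_neg hs0 (by linarith [htt.1] : t ≠ 0)).differentiableAt
    have hderiv_eq : ∀ t ∈ Set.Icc (1:ℝ) (n:ℝ),
        deriv (fun y : ℝ => (y : ℂ) ^ (-s)) t = -s * (t : ℂ) ^ (-s - 1) := fun t htt =>
      (hasDerivAt_cpow_neg hs0 (by linarith [htt.1] : t ≠ 0)).deriv
    have hcont : ContinuousOn (fun t : ℝ => -s * (t : ℂ) ^ (-s - 1)) (Set.Icc (1:ℝ) (n:ℝ)) := by
      refine continuousOn_const.mul fun t htt => ?_
      exact (Complex.continuousAt_ofReal_cpow_const t _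
        (Or.inr (by linarith [htt.1]))).continuousWithinAt
    have hint : IntegrableOn (deriv fun y : ℝ => (y : ℂ) ^ (-s)) (Set.Icc (1:ℝ) (n:ℝ)) := by
      refine (hcont.integrableOn_Icc).congr_fun ?_ measurableSet_Icc
      exact fun t htt => (hderiv_eq t htt).symm
    have h := sum_mul_eq_sub_integral_mul₀ (c γ) (c_zero γ) (n:ℝ) hdiff hint
    rw [h, S]
    congr 1
    refine setIntegral_congr_fun measurableSet_Ioc fun t htt => ?_
    rw [hφ]
    simp only
    rw [hderiv_eq t ⟨le_of_lt htt.1, htt.2⟩, S]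
  -- integrability of the pieces on `Ioi 1`
  have haesm_g' : AEStronglyMeasurable (g γ) (volume.restrict (Set.Ioi 1)) :=
    (aesm_g γ).mono_measure (Measure.restrict_mono Set.Ioi_subset_Ici_self le_rfl)
  have hcpow_cont : ∀ z : ℂ, ContinuousOn (fun t : ℝ => (t : ℂ) ^ z) (Set.Ioi (1:ℝ)) :=
    fun z t ht => (Complex.continuousAt_ofReal_cpow_const t z
      (Or.inr (by rw [Set.mem_Ioi] at ht; linarith))).continuousWithinAt
  have hint1 : IntegrableOn (fun t : ℝ => (t : ℂ) ^ (-s - 1) * g γ t) (Set.Ioi 1) := by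
    refine Integrable.mono' (g := fun t : ℝ => A * t ^ (e - s.re - 1))
      (((integrableOn_Ioi_rpow_of_lt (by linarith) one_pos)).const_mul A) ?_ ?_
    · exact (((hcpow_cont (-s-1)).aestronglyMeasurable measurableSet_Ioi).mul haesm_g')
    · refine ae_restrict_of_forall_mem measurableSet_Ioi fun t ht => ?_
      rw [Set.mem_Ioi] at ht
      have ht0 : (0:ℝ) < t := by linarith
      rw [norm_mul, Complex.norm_cpow_eq_rpow_re_of_pos ht0]
      have h1 : ‖g γ t‖ ≤ A * t ^ e := hbd t (le_of_lt ht)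
      have h2 : (0:ℝ) ≤ t ^ ((-s-1).re) := Real.rpow_nonneg ht0.le _
      have h3 : t ^ ((-s-1).re) * t ^ e = t ^ (e - s.re - 1) := by
        rw [← Real.rpow_add ht0]
        congr 1
        simp only [Complex.sub_re, Complex.neg_re, Complex.one_re]
        ring
      calc t ^ ((-s-1).re) * ‖g γ t‖ ≤ t ^ ((-s-1).re) * (A * t ^ e) :=
            mul_le_mul_of_nonneg_left h1 h2
        _ = A * (t ^ ((-s-1).re) * t ^ e) := by ring
        _ = A * t ^ (e - s.re - 1) := by rw [h3]
  have hint2 : IntegrableOn (fun t : ℝ => (t : ℂ) ^ (w γ - s - 1)) (Set.Ioi 1) := by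
    refine integrableOn_Ioi_cpow_of_lt ?_ one_pos
    simp only [Complex.sub_re, w_re, Complex.one_re]
    linarith
  -- pointwise identity for φ on Ioi 1
  have hφ_eq : ∀ t ∈ Set.Ioi (1:ℝ), φ t =
      -s * ((t : ℂ) ^ (-s - 1) * g γ t) + (-s / w γ) * (t : ℂ) ^ (w γ - s - 1) := by
    intro t ht
    rw [Set.mem_Ioi] at ht
    have ht0 : (t:ℂ) ≠ 0 := by
      simp only [ne_eq, Complex.ofReal_eq_zero]; intro hh; rw [hh] at ht; linarith
    rw [hφ]
    simp only
    rw [S_eq_g_add γ t]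
    have : (t:ℂ) ^ (w γ - s - 1) = (t:ℂ) ^ (-s-1) * (t:ℂ) ^ (w γ) := by
      rw [← Complex.cpow_add _ _ ht0]; ring_nf
    rw [this]
    field_simp
    ring
  have hsum2 : IntegrableOn (fun t : ℝ => -s * ((t:ℂ) ^ (-s - 1) * g γ t)
      + (-s / w γ) * (t:ℂ) ^ (w γ - s - 1)) (Set.Ioi 1) :=
    (hint1.const_mul (-s)).add (hint2.const_mul (-s / w γ))
  have hφint : IntegrableOn φ (Set.Ioi 1) :=
    MeasureTheory.IntegrableOn.congr_fun hsum2 (fun t ht => (hφ_eq t ht).symm) measurableSet_Ioi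
  -- value of the integral
  have hmellin : mellin (G γ) (-s) = ∫ t in Set.Ioi (1:ℝ), (t : ℂ) ^ (-s - 1) * g γ t := by
    rw [mellin]
    have h1 : ∀ t : ℝ, (t:ℂ) ^ (-s - 1) • G γ t
        = (Set.Ici (1:ℝ)).indicator (fun t : ℝ => (t : ℂ) ^ (-s - 1) * g γ t) t := by
      intro t
      by_cases ht : t ∈ Set.Ici (1:ℝ)
      · rw [G, Set.indicator_of_mem ht, Set.indicator_of_mem ht, smul_eq_mul]
      · rw [G, Set.indicator_of_notMem ht, Set.indicator_of_notMem ht, smul_zero]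
    simp_rw [h1]
    rw [integral_indicator measurableSet_Ici, Measure.restrict_restrict measurableSet_Ici,
      Set.inter_eq_self_of_subset_left (fun t (ht : t ∈ Set.Ici (1:ℝ)) =>
        Set.mem_Ioi.mpr (lt_of_lt_of_le zero_lt_one ht)),
      integral_Ici_eq_integral_Ioi]
  have hIoi2 : ∫ t in Set.Ioi (1:ℝ), (t : ℂ) ^ (w γ - s - 1) = -1 / (w γ - s) := by
    rw [integral_Ioi_cpow_of_lt (by simp only [Complex.sub_re, w_re, Complex.one_re]; linarith)
      one_pos]
    rw [show w γ - s - 1 + 1 = w γ - s by ring]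
    norm_num
  have hφval : ∫ t in Set.Ioi (1:ℝ), φ t
      = -s * mellin (G γ) (-s) + (-s / w γ) * (-1 / (w γ - s)) := by
    rw [setIntegral_congr_fun measurableSet_Ioi hφ_eq,
      integral_add (hint1.const_mul (-s)) (hint2.const_mul (-s / w γ)),
      integral_const_mul, integral_const_mul, hmellin, hIoi2]
  -- convergence of partial sums to the L-series
  have hsum : LSeriesSummable (fun n => (ArithmeticFunction.vonMangoldt n : ℂ))
      (s + (γ : ℂ) * Complex.I) := by
    refine ArithmeticFunction.LSeriesSummable_vonMangoldt ?_
    simp [hs]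
  have hterm : ∀ k : ℕ, ((k:ℝ) : ℂ) ^ (-s) * c γ k
      = LSeries.term (fun n => (ArithmeticFunction.vonMangoldt n : ℂ))
          (s + (γ : ℂ) * Complex.I) k := by
    intro k
    rcases eq_or_ne k 0 with rfl | hk
    · simp [c_zero, LSeries.term]
    · rw [LSeries.term_of_ne_zero hk, c]
      have hk0 : ((k:ℕ) : ℂ) ≠ 0 := Nat.cast_ne_zero.mpr hk
      push_cast
      rw [div_eq_mul_inv, Complex.cpow_add _ _ hk0, mul_inv, Complex.cpow_neg, neg_mul,
        Complex.cpow_neg]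
      ring
  have hLHS : Tendsto (fun n : ℕ => ∑ k ∈ Finset.Icc 0 ⌊(n:ℝ)⌋₊, ((k:ℝ) : ℂ) ^ (-s) * c γ k)
      atTop (𝓝 (LSeries (fun n => (ArithmeticFunction.vonMangoldt n : ℂ))
        (s + (γ : ℂ) * Complex.I))) := by
    have h0 := (hsum.hasSum.tendsto_sum_nat).comp (tendsto_add_atTop_nat 1)
    refine h0.congr fun n => ?_
    rw [Function.comp_apply, Nat.floor_natCast,
      show Finset.Icc 0 n = Finset.range (n+1) by
        rw [← Finset.Ico_add_one_right_eq_Icc, Nat.Ico_zero_eq_range]]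
    exact (Finset.sum_congr rfl fun k _ => hterm k).symm
  -- limit of the boundary term
  have hT1 : Tendsto (fun n : ℕ => ((n:ℝ) : ℂ) ^ (-s) * S γ (n:ℝ)) atTop (𝓝 0) := by
    have ha : Tendsto ( fun n : ℕ => ((n:ℝ) : ℂ) ^ (-s) * g γ (n:ℝ)) atTop (𝓝 0) := by
      refine squeeze_zero_norm' (a := fun n : ℕ => A * ((n:ℝ)) ^ (-(s.re - e))) ?_ ?_
      · filter_upwards [eventually_ge_atTop 1] with n hn
        have hn1 : (1:ℝ) ≤ (n:ℝ) := by exact_mod_cast hn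
        have hn0 : (0:ℝ) < (n:ℝ) := by linarith
        rw [norm_mul, Complex.norm_cpow_eq_rpow_re_of_pos hn0]
        calc ((n:ℝ)) ^ ((-s).re) * ‖g γ (n:ℝ)‖ ≤ ((n:ℝ)) ^ ((-s).re) * (A * (n:ℝ) ^ e) :=
              mul_le_mul_of_nonneg_left (hbd _ hn1) (Real.rpow_nonneg hn0.le _)
          _ = A * (((n:ℝ)) ^ ((-s).re) * ((n:ℝ)) ^ e) := by ring
          _ = A * ((n:ℝ)) ^ (-(s.re - e)) := by
              rw [← Real.rpow_add hn0]
              congr 1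
              simp only [Complex.neg_re]
              ring
      · have := (tendsto_rpow_neg_atTop (by linarith : 0 < s.re - e)).const_mul A
        rw [mul_zero] at this
        exact this.comp tendsto_natCast_atTop_atTop
    have hb : Tendsto (fun n : ℕ => ((n:ℝ) : ℂ) ^ (w γ - s) / w γ) atTop (𝓝 0) := by
      refine squeeze_zero_norm' (a := fun n : ℕ => ((n:ℝ)) ^ (-(s.re - 1))) ?_ ?_
      · filter_upwards [eventually_ge_atTop 1] with n hn
        have hn1 : (1:ℝ) ≤ (n:ℝ) := by exact_mod_cast hn
        have hn0 : (0:ℝ) < (n:ℝ) := by linarith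
        rw [norm_div, Complex.norm_cpow_eq_rpow_re_of_pos hn0]
        have h2 : (1:ℝ) ≤ ‖w γ‖ := by
          have := Complex.abs_re_le_norm (w γ); rw [w_re] at this; simpa using this
        have h3 : ((n:ℝ)) ^ ((w γ - s).re) = ((n:ℝ)) ^ (-(s.re - 1)) := by
          congr 1
          simp only [Complex.sub_re, w_re]
          ring
        rw [h3]
        calc ((n:ℝ)) ^ (-(s.re-1)) / ‖w γ‖ ≤ ((n:ℝ)) ^ (-(s.re-1)) / 1 := by
              apply div_le_div_of_nonneg_left (Real.rpow_nonneg hn0.le _) one_pos h2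
          _ = ((n:ℝ)) ^ (-(s.re-1)) := by simp
      · exact (tendsto_rpow_neg_atTop (by linarith : 0 < s.re - 1)).comp
          tendsto_natCast_atTop_atTop
    have hadd := ha.add hb
    rw [add_zero] at hadd
    refine hadd.congr' ?_
    filter_upwards [eventually_ge_atTop 1] with n hn
    have hn1 : (1:ℝ) ≤ (n:ℝ) := by exact_mod_cast hn
    have hn0 : ((n:ℝ):ℂ) ≠ 0 := by
      simp only [ne_eq, Complex.ofReal_eq_zero, Nat.cast_eq_zero]
      omega
    rw [S_eq_g_add γ (n:ℝ)]
    rw [mul_add]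
    congr 1
    rw [show w γ - s = -s + w γ by ring, Complex.cpow_add _ _ hn0]
    ring
  -- limit of the integral term
  have hT2 : Tendsto (fun n : ℕ => ∫ t in Set.Ioc (1:ℝ) (n:ℝ), φ t) atTop
      (𝓝 (∫ t in Set.Ioi (1:ℝ), φ t)) := by
    have h0 := MeasureTheory.intervalIntegral_tendsto_integral_Ioi (1:ℝ) hφint
      (tendsto_natCast_atTop_atTop (R := ℝ))
    refine h0.congr' ?_
    filter_upwards [eventually_ge_atTop 1] with n hn
    have hn1 : (1:ℝ) ≤ (n:ℝ) := by exact_mod_cast hn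
    rw [intervalIntegral.integral_of_le hn1]
  -- put everything together
  have hfinal := tendsto_nhds_unique hLHS ((hT1.sub hT2).congr fun n => (abel n).symm)
  have hkey2 : (-s / w γ) * (-1 / (w γ - s)) = -(s / (w γ * (s - w γ))) := by
    rw [div_mul_div_comm, show -s * -1 = s by ring,
      show w γ * (w γ - s) = -(w γ * (s - w γ)) by ring, div_neg]
  rw [hfinal, zero_sub, hφval, F, hmellin, hkey2]
  ring
end KeyS

section Bound
variable {γ e A : ℝ}

lemma hG0 (γ : ℝ) : ∀ x : ℝ, x < 1 → G γ x = 0 := fun x hx =>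
  Set.indicator_of_notMem (by simpa using hx) _

lemma hGbd (hbd : ∀ x : ℝ, 1 ≤ x → ‖g γ x‖ ≤ A * x ^ e) :
    ∀ x : ℝ, 1 ≤ x → ‖G γ x‖ ≤ A * x ^ e := fun x hx => by
  rw [G, Set.indicator_of_mem (by simpa using hx)]
  exact hbd x hx

lemma G_locInt (he : 0 < e) (hA : 0 < A)
    (hbd : ∀ x : ℝ, 1 ≤ x → ‖g γ x‖ ≤ A * x ^ e) :
    LocallyIntegrableOn (G γ) (Set.Ioi 0) := by
  rw [locallyIntegrableOn_iff isOpen_Ioi.isLocallyClosed]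
  intro k hk hkc
  obtain ⟨r, hr⟩ := hkc.isBounded.subset_closedBall 0
  refine Measure.integrableOn_of_bounded (hkc.measure_lt_top.ne) (aesm_G γ)
    (M := A * (max r 1) ^ e) (ae_restrict_of_forall_mem hkc.measurableSet fun x hx => ?_)
  rcases lt_or_ge x 1 with hx1 | hx1
  · rw [hG0 γ x hx1]
    simp only [norm_zero]
    positivity
  · refine (hGbd hbd x hx1).trans ?_
    have hxr : x ≤ max r 1 := by
      have := hr hx
      simp only [Metric.mem_closedBall, Real.dist_eq, abs_sub_comm, sub_zero] at this
      exact le_max_of_le_left (le_trans (le_abs_self x) this)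
    have : x ^ e ≤ (max r 1) ^ e :=
      Real.rpow_le_rpow (by linarith) hxr he.le
    nlinarith [Real.rpow_nonneg (show (0:ℝ) ≤ x by linarith) e]

lemma G_isBigO_atTop (hbd : ∀ x : ℝ, 1 ≤ x → ‖g γ x‖ ≤ A * x ^ e) :
    (G γ) =O[atTop] (fun x : ℝ => x ^ (-(-e))) := by
  rw [isBigO_iff]
  refine ⟨A, ?_⟩
  filter_upwards [eventually_ge_atTop (1:ℝ)] with x hx
  rw [neg_neg, Real.norm_rpow_of_nonneg (by linarith)]
  rw [Real.norm_of_nonneg (by linarith)]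
  exact hGbd hbd x hx

lemma G_isBigO_zero (γ b : ℝ) : (G γ) =O[𝓝[>] 0] (fun x : ℝ => x ^ (-b)) := by
  have h1 : (G γ) =ᶠ[𝓝[>] 0] (fun _ => (0:ℂ)) := by
    filter_upwards [Ioo_mem_nhdsGT one_pos] with x hx
    exact hG0 γ x hx.2
  exact h1.trans_isBigO (isBigO_zero _ _)

lemma mellin_G_diff (he : 0 < e) (hA : 0 < A)
    (hbd : ∀ x : ℝ, 1 ≤ x → ‖g γ x‖ ≤ A * x ^ e) {z : ℂ} (hz : e < z.re) :
    DifferentiableAt ℂ (fun z => mellin (G γ) (-z)) z := by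
  have h1 : DifferentiableAt ℂ (mellin (G γ)) (-z) :=
    mellin_differentiableAt_of_isBigO_rpow (a := -e) (b := -z.re - 1)
      (G_locInt he hA hbd) (G_isBigO_atTop hbd)
      (by simpa using hz) (G_isBigO_zero γ _) (by simp)
  exact h1.comp z differentiable_neg.differentiableAt

lemma w_ne_zero (γ : ℝ) : w γ ≠ 0 := by
  intro h
  have := w_re γ
  rw [h] at this
  simp at this

lemma F_diff (he : 0 < e) (hA : 0 < A)
    (hbd : ∀ x : ℝ, 1 ≤ x → ‖g γ x‖ ≤ A * x ^ e) {z : ℂ} (hz : e < z.re)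
    (hzw : z ≠ w γ) : DifferentiableAt ℂ (F γ) z := by
  have h1 : DifferentiableAt ℂ (fun z : ℂ => z * mellin (G γ) (-z)) z :=
    differentiableAt_id.mul (mellin_G_diff he hA hbd hz)
  have h2 : DifferentiableAt ℂ (fun z : ℂ => z / (w γ * (z - w γ))) z := by
    refine differentiableAt_id.div ?_ ?_
    · exact differentiableAt_const _ |>.mul (differentiableAt_id.sub (differentiableAt_const _))
    · exact mul_ne_zero (w_ne_zero γ) (sub_ne_zero.mpr hzw)
  exact h1.add h2

end Bound

section Final

lemma one_le_abs_w (γ : ℝ) : 1 ≤ ‖w γ‖ := by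
  have := Complex.abs_re_le_norm (w γ)
  rw [w_re] at this
  simpa using this

lemma bound {γ ε C : ℝ} (hε : 0 < ε) (hC : 0 < C)
    (hCb : ∀ x : ℝ, 2 ≤ x →
      ‖(∑ n ∈ Finset.Icc 1 ⌊x⌋₊,
            (ArithmeticFunction.vonMangoldt n : ℂ) * (n : ℂ) ^ (-(γ : ℂ) * Complex.I)) -
          (x : ℂ) ^ (1 - (γ : ℂ) * Complex.I) / (1 - (γ : ℂ) * Complex.I)‖ ≤
        C * Real.sqrt x * (x + |γ|) ^ ε) :
    ∀ x : ℝ, 1 ≤ x → ‖g γ x‖ ≤ (C * (1 + |γ|) ^ ε + 2) * x ^ (1/2 + ε) := by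
  intro x hx
  have hx0 : (0:ℝ) < x := by linarith
  have hxe1 : (1:ℝ) ≤ x ^ (1/2 + ε : ℝ) := by
    calc (1:ℝ) = x ^ (0:ℝ) := (Real.rpow_zero x).symm
      _ ≤ x ^ (1/2 + ε : ℝ) := Real.rpow_le_rpow_of_exponent_le hx (by linarith)
  have hxe0 : (0:ℝ) ≤ x ^ (1/2 + ε : ℝ) := by positivity
  have hCγ : (0:ℝ) ≤ C * (1 + |γ|) ^ ε := by positivity
  rcases le_or_gt 2 x with h2 | h2
  · have h0 : ‖g γ x‖ ≤ C * Real.sqrt x * (x + |γ|) ^ ε := by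
      rw [g, S_eq, w]
      exact hCb x h2
    have e1 : x + |γ| ≤ x * (1 + |γ|) := by nlinarith [abs_nonneg γ]
    have e2 : (x + |γ|) ^ ε ≤ (x * (1 + |γ|)) ^ ε :=
      Real.rpow_le_rpow (by positivity) e1 hε.le
    have e3 : (x * (1 + |γ|)) ^ ε = x ^ ε * (1 + |γ|) ^ ε :=
      Real.mul_rpow hx0.le (by positivity)
    have e4 : Real.sqrt x = x ^ (1/2 : ℝ) := Real.sqrt_eq_rpow x
    calc ‖g γ x‖ ≤ C * Real.sqrt x * (x + |γ|) ^ ε := h0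
      _ ≤ C * Real.sqrt x * (x ^ ε * (1 + |γ|) ^ ε) := by
          refine mul_le_mul_of_nonneg_left (e2.trans_eq e3) ?_
          have := Real.sqrt_nonneg x
          positivity
      _ = C * (1 + |γ|) ^ ε * (x ^ (1/2 : ℝ) * x ^ ε) := by rw [e4]; ring
      _ = C * (1 + |γ|) ^ ε * x ^ (1/2 + ε : ℝ) := by rw [← Real.rpow_add hx0]
      _ ≤ (C * (1 + |γ|) ^ ε + 2) * x ^ (1/2 + ε : ℝ) := by nlinarith
  · have hfl : ⌊x⌋₊ = 1 := by
      rw [Nat.floor_eq_iff (by linarith : (0:ℝ) ≤ x)]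
      push_cast
      exact ⟨hx, by linarith⟩
    have hS : S γ x = 0 := by
      rw [S, hfl, show Finset.Icc 0 1 = ({0, 1} : Finset ℕ) from rfl,
        Finset.sum_insert (by decide), Finset.sum_singleton, c_zero, c_one, add_zero]
    have hgx : ‖g γ x‖ ≤ x := by
      rw [g, hS, zero_sub, norm_neg, norm_div,
        Complex.norm_cpow_eq_rpow_re_of_pos hx0, w_re, Real.rpow_one]
      calc x / ‖w γ‖ ≤ x / 1 :=
            div_le_div_of_nonneg_left hx0.le one_pos (one_le_abs_w γ)
        _ = x := by simp
    calc ‖g γ x‖ ≤ x := hgx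
      _ ≤ 2 := h2.le
      _ ≤ 2 * x ^ (1/2 + ε : ℝ) := by nlinarith
      _ ≤ (C * (1 + |γ|) ^ ε + 2) * x ^ (1/2 + ε : ℝ) := by nlinarith

lemma analyticAt_deriv {f : ℂ → ℂ} {x : ℂ} (h : AnalyticAt ℂ f x) :
    AnalyticAt ℂ (deriv f) x := by
  obtain ⟨s, hs, hsa⟩ := h.exists_mem_nhds_analyticOnNhd
  exact hsa.deriv x (mem_of_mem_nhds hs)

lemma no_zero {β γ : ℝ} (hζρ : riemannZeta ((β : ℂ) + (γ : ℂ) * Complex.I) = 0)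
    (hρ1 : β < 1) {e A : ℝ} (he : 1/2 < e) (heβ : e < β) (he1 : e < 1) (hA : 0 < A)
    (hbd : ∀ x : ℝ, 1 ≤ x → ‖g γ x‖ ≤ A * x ^ e) : False := by
  have he0 : (0:ℝ) < e := by linarith
  -- the four convex pieces
  set V1 : Set ℂ := {z : ℂ | e < z.re ∧ z.re < 1} with hV1
  set V2 : Set ℂ := {z : ℂ | 1 < z.re} with hV2
  set V3 : Set ℂ := {z : ℂ | e < z.re ∧ z.im < -γ} with hV3
  set V4 : Set ℂ := {z : ℂ | e < z.re ∧ -γ < z.im} with hV4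
  set Om : Set ℂ := ((V3 ∪ V2) ∪ V4) ∪ V1 with hOm
  have hV1o : IsOpen V1 :=
    (isOpen_lt continuous_const Complex.continuous_re).inter
      (isOpen_lt Complex.continuous_re continuous_const)
  have hV2o : IsOpen V2 := isOpen_lt continuous_const Complex.continuous_re
  have hV3o : IsOpen V3 :=
    (isOpen_lt continuous_const Complex.continuous_re).inter
      (isOpen_lt Complex.continuous_im continuous_const)
  have hV4o : IsOpen V4 :=
    (isOpen_lt continuous_const Complex.continuous_re).inter
      (isOpen_lt continuous_const Complex.continuous_im)
  have hOmo : IsOpen Om := ((hV3o.union hV2o).union hV4o).union hV1o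
  -- preconnectedness
  have hV1c : Convex ℝ V1 := (convex_halfSpace_re_gt e).inter (convex_halfSpace_re_lt 1)
  have hV2c : Convex ℝ V2 := convex_halfSpace_re_gt 1
  have hV3c : Convex ℝ V3 := (convex_halfSpace_re_gt e).inter (convex_halfSpace_im_lt (-γ))
  have hV4c : Convex ℝ V4 := (convex_halfSpace_re_gt e).inter (convex_halfSpace_im_gt (-γ))
  have hp1 : ((2 : ℂ) + (-γ - 1) * Complex.I) ∈ V3 ∩ V2 := by
    refine ⟨⟨?_, ?_⟩, ?_⟩ <;> simp [hV2, hV3] <;> linarith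
  have hp2 : ((2 : ℂ) + (-γ + 1) * Complex.I) ∈ V2 ∩ V4 := by
    refine ⟨?_, ?_, ?_⟩ <;> simp [hV2, hV4] <;> linarith
  have hp3 : (((e + β)/2 : ℝ) + (-γ - 1) * Complex.I : ℂ) ∈ V3 ∩ V1 := by
    refine ⟨⟨?_, ?_⟩, ⟨?_, ?_⟩⟩ <;> simp [hV1, hV3] <;> linarith
  have hOmpre : IsPreconnected Om := by
    have h32 : IsPreconnected (V3 ∪ V2) :=
      IsPreconnected.union _ hp1.1 hp1.2 hV3c.isPreconnected hV2c.isPreconnected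
    have h324 : IsPreconnected ((V3 ∪ V2) ∪ V4) :=
      IsPreconnected.union _ (Set.mem_union_right _ hp2.1) hp2.2 h32 hV4c.isPreconnected
    exact IsPreconnected.union _
      (Set.mem_union_left _ (Set.mem_union_left _ hp3.1)) hp3.2 h324 hV1c.isPreconnected
  -- basic membership facts
  have hwim : (w γ).im = -γ := by simp [w]
  have hOmsub : Om ⊆ {z : ℂ | e < z.re} ∩ {w γ}ᶜ := by
    rintro z (((⟨hz1, hz2⟩ | hz) | ⟨hz1, hz2⟩) | ⟨hz1, hz2⟩)
    · exact ⟨hz1, fun hzw => by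
        rw [Set.mem_singleton_iff.mp hzw, hwim] at hz2; linarith⟩
    · have h1 : 1 < z.re := hz
      refine ⟨by simp only [Set.mem_setOf_eq]; linarith, fun hzw => ?_⟩
      rw [Set.mem_singleton_iff.mp hzw, w_re] at h1
      exact lt_irrefl _ h1
    · exact ⟨hz1, fun hzw => by
        rw [Set.mem_singleton_iff.mp hzw, hwim] at hz2; linarith⟩
    · exact ⟨hz1, fun hzw => by
        rw [Set.mem_singleton_iff.mp hzw, w_re] at hz2; linarith⟩
  have hOmz : ∀ z ∈ Om, z + (γ : ℂ) * Complex.I ≠ 1 := by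
    intro z hz hcon
    apply (hOmsub hz).2
    rw [Set.mem_singleton_iff, w]
    linear_combination hcon
  -- analyticity of ζ away from 1
  have hζana : AnalyticOnNhd ℂ riemannZeta {(1:ℂ)}ᶜ :=
    DifferentiableOn.analyticOnNhd
      (fun z hz => (differentiableAt_riemannZeta hz).differentiableWithinAt)
      isOpen_compl_singleton
  have htrans : ∀ z : ℂ, AnalyticAt ℂ (fun u : ℂ => u + (γ : ℂ) * Complex.I) z :=
    fun z => analyticAt_id.add analyticAt_const
  have hZana : ∀ z ∈ Om, AnalyticAt ℂ
      (fun u : ℂ => riemannZeta (u + (γ : ℂ) * Complex.I)) z := by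
    intro z hz
    have h1 : AnalyticAt ℂ riemannZeta (z + (γ : ℂ) * Complex.I) := hζana _ (hOmz z hz)
    have h2 := AnalyticAt.comp (g := riemannZeta)
      (f := fun u : ℂ => u + (γ : ℂ) * Complex.I) (x := z) h1 (htrans z)
    exact h2
  have hP : AnalyticOnNhd ℂ
      (fun z => -deriv riemannZeta (z + (γ : ℂ) * Complex.I)) Om := by
    intro z hz
    have h1 : AnalyticAt ℂ (deriv riemannZeta) (z + (γ : ℂ) * Complex.I) :=
      hζana.deriv _ (hOmz z hz)
    have h2 := AnalyticAt.comp (g := deriv riemannZeta)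
      (f := fun u : ℂ => u + (γ : ℂ) * Complex.I) (x := z) h1 (htrans z)
    have h3 : AnalyticAt ℂ (fun u : ℂ => deriv riemannZeta (u + (γ : ℂ) * Complex.I)) z := by
      exact h2
    exact h3.neg
  have hFana : AnalyticOnNhd ℂ (F γ) ({z : ℂ | e < z.re} ∩ {w γ}ᶜ) := by
    refine DifferentiableOn.analyticOnNhd
      (fun z hz => (F_diff he0 hA hbd hz.1 hz.2).differentiableWithinAt) ?_
    exact (isOpen_lt continuous_const Complex.continuous_re).inter isOpen_compl_singleton
  have hQ : AnalyticOnNhd ℂ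
      (fun z => F γ z * riemannZeta (z + (γ : ℂ) * Complex.I)) Om :=
    fun z hz => (hFana _ (hOmsub hz)).mul (hZana z hz)
  -- equality on the half-plane re > 1
  have h2Om : (2 : ℂ) ∈ Om := by
    refine Set.mem_union_left _ (Set.mem_union_left _ (Set.mem_union_right _ ?_))
    show (1:ℝ) < (2:ℂ).re
    simp
  have heqgt : ∀ z : ℂ, 1 < z.re →
      -deriv riemannZeta (z + (γ : ℂ) * Complex.I)
        = F γ z * riemannZeta (z + (γ : ℂ) * Complex.I) := by
    intro z hz
    have hre : 1 < (z + (γ : ℂ) * Complex.I).re := by simpa using hz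
    have hζne : riemannZeta (z + (γ : ℂ) * Complex.I) ≠ 0 :=
      riemannZeta_ne_zero_of_one_le_re hre.le
    have h1 := ArithmeticFunction.LSeries_vonMangoldt_eq_deriv_riemannZeta_div hre
    have h2 := key he he1 hA hbd hz
    rw [h2] at h1
    rw [h1, div_mul_cancel₀ _ hζne]
  -- identity theorem on Om
  have hev2 : (fun z => -deriv riemannZeta (z + (γ : ℂ) * Complex.I))
      =ᶠ[nhds (2:ℂ)] (fun z => F γ z * riemannZeta (z + (γ : ℂ) * Complex.I)) := by
    filter_upwards [(isOpen_lt continuous_const Complex.continuous_re).mem_nhds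
      (show (1:ℝ) < (2:ℂ).re by simp)] with z hz
    exact heqgt z hz
  have heqOn := AnalyticOnNhd.eqOn_of_preconnected_of_eventuallyEq hP hQ hOmpre h2Om hev2
  -- eventual equality near β
  have hβV1 : (β : ℂ) ∈ V1 := by
    constructor <;> simp only [Set.mem_setOf_eq, Complex.ofReal_re] <;> linarith
  have hβOm : (β : ℂ) ∈ Om := Set.mem_union_right _ hβV1
  have hev_near : ∀ᶠ z in nhds (β : ℂ),
      -deriv riemannZeta (z + (γ : ℂ) * Complex.I)
        = F γ z * riemannZeta (z + (γ : ℂ) * Complex.I) := by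
    filter_upwards [hOmo.mem_nhds hβOm] with z hz
    exact heqOn hz
  -- the shifted zeta function
  set Z : ℂ → ℂ := fun z => riemannZeta (z + (γ : ℂ) * Complex.I) with hZdef
  have hZβ : Z (β : ℂ) = 0 := hζρ
  have hZaβ : AnalyticAt ℂ Z (β : ℂ) := hZana _ hβOm
  have hdZ : ∀ᶠ z in nhds (β : ℂ), deriv Z z = -(F γ z) * Z z := by
    filter_upwards [hev_near] with z hz
    have h1 : deriv Z z = deriv riemannZeta (z + (γ : ℂ) * Complex.I) :=
      deriv_comp_add_const riemannZeta _ z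
    have h2 : Z z = riemannZeta (z + (γ : ℂ) * Complex.I) := rfl
    rw [h1, h2]
    linear_combination -hz
  -- order analysis
  have horder_ne_top : analyticOrderAt Z (β : ℂ) ≠ ⊤ := by
    intro htop
    have hz0 : ∀ᶠ z in nhds (β : ℂ), Z z = 0 := analyticOrderAt_eq_top.mp htop
    have htend : Filter.Tendsto (fun u : ℂ => u - (γ : ℂ) * Complex.I)
        (nhds ((β : ℂ) + (γ : ℂ) * Complex.I)) (nhds (β : ℂ)) := by
      have h1 : Filter.Tendsto (fun u : ℂ => u - (γ : ℂ) * Complex.I)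
          (nhds ((β : ℂ) + (γ : ℂ) * Complex.I))
          (nhds ((β : ℂ) + (γ : ℂ) * Complex.I - (γ : ℂ) * Complex.I)) :=
        (continuous_id.sub continuous_const).tendsto _
      have h2 : (β : ℂ) + (γ : ℂ) * Complex.I - (γ : ℂ) * Complex.I = (β : ℂ) := by ring
      rwa [h2] at h1
    have hζ0 : ∀ᶠ u in nhds ((β : ℂ) + (γ : ℂ) * Complex.I), riemannZeta u = 0 := by
      filter_upwards [htend.eventually hz0] with u hu
      have h3 : riemannZeta (u - (γ : ℂ) * Complex.I + (γ : ℂ) * Complex.I) = 0 := hu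
      rwa [show u - (γ : ℂ) * Complex.I + (γ : ℂ) * Complex.I = u by ring] at h3
    have hρne1 : (β : ℂ) + (γ : ℂ) * Complex.I ≠ 1 := by
      intro hcon
      have := congrArg Complex.re hcon
      simp at this
      linarith
    have hpre : IsPreconnected ({(1:ℂ)}ᶜ : Set ℂ) :=
      (isConnected_compl_singleton_of_one_lt_rank
        (by rw [rank_real_complex]; exact Cardinal.one_lt_two) 1).isPreconnected
    have hall := AnalyticOnNhd.eqOn_of_preconnected_of_eventuallyEq hζana
      (analyticOnNhd_const (v := (0:ℂ))) hpre
      (show (β : ℂ) + (γ : ℂ) * Complex.I ∈ {(1:ℂ)}ᶜ by simpa using hρne1) hζ0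
    have h2 : riemannZeta 2 = 0 := hall (show (2:ℂ) ∈ {(1:ℂ)}ᶜ by norm_num)
    exact riemannZeta_ne_zero_of_one_le_re (by norm_num : 1 ≤ (2:ℂ).re) h2
  obtain ⟨m, hm⟩ := WithTop.ne_top_iff_exists.mp horder_ne_top
  obtain ⟨φ, hφa, hφβ, hZeq⟩ := (hZaβ.analyticOrderAt_eq_natCast (n := m)).mp hm.symm
  have hm0 : m ≠ 0 := by
    rintro rfl
    apply hφβ
    have h1 := hZeq.self_of_nhds
    rw [hZβ] at h1
    simpa using h1.symm
  obtain ⟨k, rfl⟩ : ∃ k, m = k + 1 :=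
    ⟨m - 1, (Nat.succ_pred_eq_of_pos (Nat.pos_of_ne_zero hm0)).symm⟩
  -- compute the derivative of Z near β
  have hZeq' : Z =ᶠ[nhds (β : ℂ)] fun z => (z - (β:ℂ))^(k+1) • φ z := hZeq
  have hφd : ∀ᶠ z in nhds (β : ℂ), deriv Z z
      = ((k:ℂ)+1) * (z - (β:ℂ))^k * φ z + (z - (β:ℂ))^(k+1) * deriv φ z := by
    filter_upwards [hZeq'.deriv, hφa.eventually_analyticAt] with z hz1 hz2
    rw [hz1]
    have hd1 : HasDerivAt (fun u : ℂ => (u - (β:ℂ))^(k+1))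
        (((k:ℂ)+1) * (z - (β:ℂ))^k) z := by
      have h := ((hasDerivAt_id z).sub_const ((β:ℂ))).pow (k+1)
      simp at h
      exact h
    have hd2 : HasDerivAt φ (deriv φ z) z := hz2.differentiableAt.hasDerivAt
    have hd3 := hd1.mul hd2
    have h4 : (fun u : ℂ => (u - (β:ℂ))^(k+1) • φ u)
        = fun u : ℂ => (u - (β:ℂ))^(k+1) * φ u := by
      funext u
      rw [smul_eq_mul]
    rw [h4]
    exact hd3.deriv
  -- the eventual equation
  have hE : ∀ᶠ z in nhds (β : ℂ),
      ((k:ℂ)+1) * (z - (β:ℂ))^k * φ z + (z - (β:ℂ))^(k+1) * deriv φ z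
        = -(F γ z) * ((z - (β:ℂ))^(k+1) * φ z) := by
    filter_upwards [hφd, hdZ, hZeq] with z h1 h2 h3
    rw [← h1, h2, h3, smul_eq_mul]
  have hE' : ∀ᶠ z in nhdsWithin (β : ℂ) {(β:ℂ)}ᶜ,
      ((k:ℂ)+1) * φ z + (z - (β:ℂ)) * deriv φ z
        = -(F γ z) * ((z - (β:ℂ)) * φ z) := by
    filter_upwards [hE.filter_mono nhdsWithin_le_nhds, self_mem_nhdsWithin] with z hz hzne
    have hzb : z - (β:ℂ) ≠ 0 := sub_ne_zero.mpr hzne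
    have hpow : (z - (β:ℂ))^k ≠ 0 := pow_ne_zero _ hzb
    apply mul_left_cancel₀ hpow
    have e1 : (z-(β:ℂ))^k * (((k:ℂ)+1) * φ z + (z-(β:ℂ)) * deriv φ z)
        = ((k:ℂ)+1) * (z-(β:ℂ))^k * φ z + (z-(β:ℂ))^(k+1) * deriv φ z := by ring
    have e2 : (z-(β:ℂ))^k * (-(F γ z) * ((z-(β:ℂ)) * φ z))
        = -(F γ z) * ((z-(β:ℂ))^(k+1) * φ z) := by ring
    rw [e1, e2, hz]
  -- limits
  have hβsub : ((β:ℂ)) ∈ {z : ℂ | e < z.re} ∩ {w γ}ᶜ := hOmsub hβOm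
  have hFcont : ContinuousAt (F γ) (β:ℂ) :=
    (F_diff he0 hA hbd hβsub.1 hβsub.2).continuousAt
  have hL : Filter.Tendsto (fun z : ℂ => ((k:ℂ)+1) * φ z + (z - (β:ℂ)) * deriv φ z)
      (nhds (β:ℂ)) (nhds (((k:ℂ)+1) * φ (β:ℂ))) := by
    have h1 : ContinuousAt (fun z : ℂ => ((k:ℂ)+1) * φ z + (z - (β:ℂ)) * deriv φ z) (β:ℂ) :=
      (continuousAt_const.mul hφa.continuousAt).add
        ((continuousAt_id.sub continuousAt_const).mul (analyticAt_deriv hφa).continuousAt)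
    have h2 := h1.tendsto
    simpa using h2
  have hR : Filter.Tendsto (fun z : ℂ => -(F γ z) * ((z - (β:ℂ)) * φ z))
      (nhds (β:ℂ)) (nhds 0) := by
    have h1 : ContinuousAt (fun z : ℂ => -(F γ z) * ((z - (β:ℂ)) * φ z)) (β:ℂ) :=
      hFcont.neg.mul ((continuousAt_id.sub continuousAt_const).mul hφa.continuousAt)
    have h2 := h1.tendsto
    simpa using h2
  have huniq : ((k:ℂ)+1) * φ (β:ℂ) = 0 :=
    tendsto_nhds_unique ((hL.mono_left nhdsWithin_le_nhds).congr' hE')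
      (hR.mono_left nhdsWithin_le_nhds)
  have hk1 : ((k:ℂ)+1) ≠ 0 := by
    have h1 : ((k+1 : ℕ) : ℂ) ≠ 0 := Nat.cast_ne_zero.mpr (Nat.succ_ne_zero k)
    simpa using h1
  exact hφβ ((mul_eq_zero.mp huniq).resolve_left hk1)

end Final

end RHAux

end RHAux

theorem stmt_4
    (h : ∀ ε : ℝ, 0 < ε → ∃ C > 0, ∀ x y : ℝ, 2 ≤ x →
      ‖(∑ n ∈ Finset.Icc 1 ⌊x⌋₊,
            (ArithmeticFunction.vonMangoldt n : ℂ) * (n : ℂ) ^ (-(y : ℂ) * Complex.I)) -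
          (x : ℂ) ^ (1 - (y : ℂ) * Complex.I) / (1 - (y : ℂ) * Complex.I)‖ ≤
        C * Real.sqrt x * (x + |y|) ^ ε) :
    RH := by
  have main : ∀ ρ : ℂ, riemannZeta ρ = 0 → 1/2 < ρ.re → ρ.re < 1 → False := by
    intro ρ hζ hhalf h1
    set ε : ℝ := (ρ.re - 1/2)/2 with hεdef
    have hε0 : 0 < ε := by rw [hεdef]; linarith
    obtain ⟨C, hC0, hCb⟩ := h ε hε0
    have hbd := RHAux.bound (γ := ρ.im) hε0 hC0 (fun x hx => hCb x ρ.im hx)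
    refine RHAux.no_zero (β := ρ.re) (γ := ρ.im) ?_ h1
      (e := 1/2 + ε) (A := C * (1 + |ρ.im|) ^ ε + 2) ?_ ?_ ?_ ?_ hbd
    · rw [Complex.re_add_im]; exact hζ
    · linarith
    · rw [hεdef]; linarith
    · rw [hεdef]; linarith
    · positivity
  intro ρ hζ h0 h1
  by_contra hne
  rcases lt_or_gt_of_ne hne with hlt | hgt
  · refine main (1 - ρ) ?_ ?_ ?_
    · rw [riemannZeta_one_sub ?_ ?_]
      · rw [hζ, mul_zero]
      · intro n hn
        have := congrArg Complex.re hn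
        simp at this
        have hn0 : (0:ℝ) ≤ (n:ℝ) := Nat.cast_nonneg n
        linarith
      · intro hcon
        rw [hcon] at h1
        simp at h1
    · simp only [Complex.sub_re, Complex.one_re]
      linarith
    · simp only [Complex.sub_re, Complex.one_re]
      linarith
  · exact main ρ hζ hgt h1
end

section
/- For every positive integer m, every real y, and every complex s with Re s > 2, one has ∫_1^∞ ( −∑_{j=0}^{m−1} x^{1−iy} (log x)^{m−1−j} / ((m−1−j)! · (iy−1)^{j+1}) ) · x^{−s} dx = (1/(s−1)) · ( 1/(s−2+iy)^m − 1/(iy−1)^m ), where x ranges over real numbers and x^{1−iy}, x^{−s} denote complex powers of the positive real x. -/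
open Finset MeasureTheory Filter Asymptotics Set Real

lemma aux_isBigO (n : ℕ) (c : ℂ) {t : ℝ} (ht : 0 < t) :
    (fun x : ℝ ↦ (x : ℂ) ^ c * (Real.log x : ℂ) ^ n) =O[atTop] fun x : ℝ ↦ x ^ (c.re + t) := by
  have h1 : (fun x : ℝ ↦ (x : ℂ) ^ c) =O[atTop] fun x : ℝ ↦ x ^ c.re := by
    refine IsBigO.of_bound 1 ?_
    filter_upwards [eventually_gt_atTop 0] with x hx
    rw [one_mul, Complex.norm_cpow_eq_rpow_re_of_pos hx,
      Real.norm_eq_abs, abs_of_pos (Real.rpow_pos_of_pos hx _)]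
  have h2 : (fun x : ℝ ↦ ((Real.log x : ℂ)) ^ n) =O[atTop] fun x : ℝ ↦ x ^ t := by
    refine IsBigO.trans ?_ (isLittleO_log_rpow_rpow_atTop (n : ℝ) ht).isBigO
    refine IsBigO.of_bound 1 ?_
    filter_upwards [eventually_ge_atTop 1] with x hx
    have hl : 0 ≤ Real.log x := Real.log_nonneg hx
    have hn : ‖((Real.log x : ℂ)) ^ n‖ = ‖Real.log x ^ (n : ℝ)‖ := by
      rw [norm_pow, Complex.norm_real, Real.norm_eq_abs, Real.norm_eq_abs, abs_of_nonneg hl,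
        abs_of_nonneg (Real.rpow_nonneg hl _), Real.rpow_natCast]
    rw [one_mul, hn]
  refine (h1.mul h2).congr' (EventuallyEq.refl _ _) ?_
  filter_upwards [eventually_gt_atTop 0] with x hx
  rw [← Real.rpow_add hx]

lemma aux_integrableOn (n : ℕ) {a : ℂ} (ha : a.re < -1) :
    IntegrableOn (fun x : ℝ ↦ (x : ℂ) ^ a * (Real.log x : ℂ) ^ n) (Set.Ioi 1) := by
  have ht : 0 < (-1 - a.re) / 2 := by linarith
  have hb : a.re + (-1 - a.re) / 2 < -1 := by linarith
  have hcont : ContinuousOn (fun x : ℝ ↦ (x : ℂ) ^ a * (Real.log x : ℂ) ^ n) (Set.Ici 1) := by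
    intro x hx
    have hx0 : (0 : ℝ) < x := lt_of_lt_of_le one_pos hx
    refine ContinuousAt.continuousWithinAt ?_
    exact (Complex.continuousAt_ofReal_cpow_const _ _ (Or.inr hx0.ne')).mul
      ((Complex.continuous_ofReal.continuousAt.comp ((Real.continuousAt_log hx0.ne').comp continuousAt_id)).pow n)
  have hloc : LocallyIntegrableOn (fun x : ℝ ↦ (x : ℂ) ^ a * (Real.log x : ℂ) ^ n)
      (Set.Ici 1) volume := hcont.locallyIntegrableOn measurableSet_Ici
  have := hloc.integrableOn_of_isBigO_atTop (aux_isBigO n a ht)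
    ⟨Set.Ioi 1, Ioi_mem_atTop 1, integrableOn_Ioi_rpow_of_lt hb one_pos⟩
  exact this.mono_set Set.Ioi_subset_Ici_self

lemma aux_integral (n : ℕ) {a : ℂ} (ha : a.re < -1) :
    ∫ x in Set.Ioi (1 : ℝ), (x : ℂ) ^ a * (Real.log x : ℂ) ^ n
      = (n.factorial : ℂ) / (-(a + 1)) ^ (n + 1) := by
  have ha1 : a + 1 ≠ 0 := by
    intro h
    have := congrArg Complex.re h
    simp at this
    linarith
  have hne : a ≠ -1 := by
    intro h; rw [h] at ha; norm_num at ha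
  induction n with
  | zero =>
      simp only [pow_zero, mul_one, Nat.factorial_zero, Nat.cast_one, pow_one]
      rw [integral_Ioi_cpow_of_lt ha one_pos]
      push_cast
      rw [Complex.one_cpow, neg_div, pow_one, div_neg]
  | succ n ih =>
      -- integration by parts
      set f : ℝ → ℂ := fun x ↦ (x : ℂ) ^ (a + 1) / (a + 1) * (Real.log x : ℂ) ^ (n + 1) with hf
      set g : ℝ → ℂ := fun x ↦ (x : ℂ) ^ a * (Real.log x : ℂ) ^ (n + 1)
        + ((n + 1 : ℂ) / (a + 1)) * ((x : ℂ) ^ a * (Real.log x : ℂ) ^ n) with hg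
      have hderiv : ∀ x ∈ Set.Ici (1 : ℝ), HasDerivAt f (g x) x := by
        intro x hx
        have hx0 : (0 : ℝ) < x := lt_of_lt_of_le one_pos hx
        have h1 := hasDerivAt_ofReal_cpow_const' hx0.ne' hne
        have h2 : HasDerivAt (fun y : ℝ ↦ ((Real.log y : ℂ)) ^ (n + 1))
            ((((n + 1 : ℝ) * Real.log x ^ n * x⁻¹ : ℝ)) : ℂ) x := by
          have := ((Real.hasDerivAt_log hx0.ne').pow (n + 1)).ofReal_comp
          simpa [Complex.ofReal_pow] using this
        have := h1.mul h2
        convert this using 1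
        · exact rfl
        · exact rfl
        have hxc : (x : ℂ) ≠ 0 := by exact_mod_cast hx0.ne'
        have hxa : (x : ℂ) ^ (a + 1) = (x : ℂ) ^ a * x := by
          rw [Complex.cpow_add _ _ hxc, Complex.cpow_one]
        rw [hg]
        simp only [hxa]
        push_cast
        field_simp
        try ring
      have hint1 := aux_integrableOn (n + 1) ha
      have hint0 := aux_integrableOn n ha
      have hgint : IntegrableOn g (Set.Ioi 1) := by
        exact hint1.add (hint0.const_mul _)
      have htend : Tendsto f atTop (nhds 0) := by
        have ht : 0 < (-(a.re + 1)) / 2 := by linarith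
        have hO : (fun x : ℝ ↦ (x : ℂ) ^ (a + 1) * (Real.log x : ℂ) ^ (n + 1))
            =O[atTop] fun x : ℝ ↦ x ^ ((a + 1).re + (-(a.re + 1)) / 2) := aux_isBigO _ _ ht
        have hO2 : f =O[atTop] fun x : ℝ ↦ x ^ ((a + 1).re + (-(a.re + 1)) / 2) := by
          have : f = fun x : ℝ ↦ (a + 1)⁻¹ * ((x : ℂ) ^ (a + 1) * (Real.log x : ℂ) ^ (n + 1)) := by
            funext x; simp only [hf]; field_simp; try ring
          rw [this]
          exact hO.const_mul_left _
        refine hO2.trans_tendsto ?_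
        have hr : 0 < -((a + 1).re + (-(a.re + 1)) / 2) := by
          simp only [Complex.add_re, Complex.one_re]
          linarith
        have := tendsto_rpow_neg_atTop hr
        simpa using this
      have key := integral_Ioi_of_hasDerivAt_of_tendsto' hderiv hgint htend
      have hf1 : f 1 = 0 := by simp [hf]
      rw [hf1, sub_zero] at key
      rw [hg] at key
      rw [MeasureTheory.integral_add hint1 (hint0.const_mul _),
        MeasureTheory.integral_const_mul, ih] at key
      have hpow : (-(a + 1)) ^ (n + 1) ≠ 0 := pow_ne_zero _ (neg_ne_zero.mpr ha1)
      have hI : ∫ x in Set.Ioi (1:ℝ), (x : ℂ) ^ a * (Real.log x : ℂ) ^ (n + 1)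
          = -((n + 1 : ℂ) / (a + 1)) * ((n.factorial : ℂ) / (-(a + 1)) ^ (n + 1)) := by
        linear_combination key
      have h2 : (-(a + 1)) ≠ 0 := neg_ne_zero.mpr ha1
      rw [hI, Nat.factorial_succ]
      push_cast
      rw [← div_neg, div_mul_div_comm, ← pow_succ']

lemma aux_alg (m : ℕ) (w z : ℂ) (hw : w ≠ 0) (hz : z ≠ 0) (hzw : z - w ≠ 0) :
    -∑ j ∈ Finset.range m, 1 / (w ^ (j + 1) * z ^ (m - j))
      = 1 / (z - w) * (1 / z ^ m - 1 / w ^ m) := by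
  have hne : z ≠ w := fun h => hzw (by rw [h, sub_self])
  have hx : w⁻¹ - z⁻¹ ≠ 0 := by
    rw [sub_ne_zero]
    exact fun h => hne (by rw [← inv_inv z, ← h, inv_inv])
  have hgeom := geom_sum₂_mul (w⁻¹) (z⁻¹) m
  have hS : ∑ i ∈ Finset.range m, w⁻¹ ^ i * z⁻¹ ^ (m - 1 - i)
      = (w⁻¹ ^ m - z⁻¹ ^ m) / (w⁻¹ - z⁻¹) := (eq_div_iff hx).mpr hgeom
  have hsum : ∑ j ∈ Finset.range m, 1 / (w ^ (j + 1) * z ^ (m - j))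
      = w⁻¹ * z⁻¹ * ∑ i ∈ Finset.range m, w⁻¹ ^ i * z⁻¹ ^ (m - 1 - i) := by
    rw [Finset.mul_sum]
    refine Finset.sum_congr rfl fun j hj => ?_
    have hj' : j < m := Finset.mem_range.mp hj
    have h1 : m - j = (m - 1 - j) + 1 := by omega
    rw [h1]
    simp only [inv_pow]
    field_simp
    ring
  rw [hsum, hS]
  simp only [inv_pow]
  field_simp
  try ring
  try exact Or.inl trivial

theorem stmt_12 (m : ℕ) (hm : 0 < m) (y : ℝ) (s : ℂ) (hs : 2 < s.re) :
    ∫ x in Set.Ioi (1 : ℝ),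
        (-∑ j ∈ Finset.range m,
            (x : ℂ) ^ (1 - (y : ℂ) * Complex.I) * (Real.log x : ℂ) ^ (m - 1 - j) /
              ((Nat.factorial (m - 1 - j) : ℂ) * ((y : ℂ) * Complex.I - 1) ^ (j + 1))) *
          (x : ℂ) ^ (-s) =
      1 / (s - 1) *
        (1 / (s - 2 + (y : ℂ) * Complex.I) ^ m - 1 / ((y : ℂ) * Complex.I - 1) ^ m) := by
  set w : ℂ := (y : ℂ) * Complex.I - 1 with hw_def
  set z : ℂ := s - 2 + (y : ℂ) * Complex.I with hz_def
  set a : ℂ := 1 - (y : ℂ) * Complex.I - s with ha_def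
  have hyI : ((y : ℂ) * Complex.I).re = 0 := by
    simp [Complex.mul_re]
  have ha : a.re < -1 := by
    rw [ha_def]
    simp only [Complex.sub_re, Complex.one_re, hyI]
    linarith
  have hw : w ≠ 0 := by
    intro h
    have := congrArg Complex.re h
    rw [hw_def] at this
    simp only [Complex.sub_re, Complex.one_re, hyI, Complex.zero_re] at this
    linarith
  have hz : z ≠ 0 := by
    intro h
    have := congrArg Complex.re h
    rw [hz_def] at this
    simp only [Complex.add_re, Complex.sub_re, hyI, Complex.zero_re] at this
    have h2 : (2 : ℂ).re = 2 := by norm_num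
    rw [h2] at this
    linarith
  have hzw : z - w ≠ 0 := by
    intro h
    have := congrArg Complex.re h
    rw [hz_def, hw_def] at this
    simp only [Complex.sub_re, Complex.add_re, Complex.one_re, hyI, Complex.zero_re] at this
    have h2 : (2 : ℂ).re = 2 := by norm_num
    rw [h2] at this
    linarith
  have hza : z = -(a + 1) := by rw [hz_def, ha_def]; ring
  have hcong : Set.EqOn
      (fun x : ℝ ↦ (-∑ j ∈ Finset.range m,
            (x : ℂ) ^ (1 - (y : ℂ) * Complex.I) * (Real.log x : ℂ) ^ (m - 1 - j) /
              ((Nat.factorial (m - 1 - j) : ℂ) * w ^ (j + 1))) * (x : ℂ) ^ (-s))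
      (fun x : ℝ ↦ ∑ j ∈ Finset.range m,
          (-(1 / ((Nat.factorial (m - 1 - j) : ℂ) * w ^ (j + 1)))) *
            ((x : ℂ) ^ a * (Real.log x : ℂ) ^ (m - 1 - j)))
      (Set.Ioi 1) := by
    intro x hx
    have hx0 : (0 : ℝ) < x := lt_trans one_pos hx
    have hxc : (x : ℂ) ≠ 0 := by exact_mod_cast hx0.ne'
    have hpow : (x : ℂ) ^ (1 - (y : ℂ) * Complex.I) * (x : ℂ) ^ (-s) = (x : ℂ) ^ a := by
      rw [← Complex.cpow_add _ _ hxc]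
      congr 1
    simp only
    rw [neg_mul, Finset.sum_mul, ← Finset.sum_neg_distrib]
    refine Finset.sum_congr rfl fun j hj => ?_
    rw [← hpow]
    ring
  rw [MeasureTheory.setIntegral_congr_fun measurableSet_Ioi hcong,
    MeasureTheory.integral_finset_sum _
      (fun j _ => ((aux_integrableOn (m - 1 - j) ha).const_mul _))]
  have hterm : ∀ j ∈ Finset.range m,
      (-(1 / ((Nat.factorial (m - 1 - j) : ℂ) * w ^ (j + 1)))) *
        ∫ x in Set.Ioi (1 : ℝ), (x : ℂ) ^ a * (Real.log x : ℂ) ^ (m - 1 - j)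
      = -(1 / (w ^ (j + 1) * z ^ (m - j))) := by
    intro j hj
    have hjm : j < m := Finset.mem_range.mp hj
    rw [aux_integral _ ha, ← hza]
    have hfac : ((Nat.factorial (m - 1 - j) : ℂ)) ≠ 0 :=
      Nat.cast_ne_zero.mpr (Nat.factorial_ne_zero _)
    have hmj : m - 1 - j + 1 = m - j := by omega
    rw [hmj]
    have hzp : z ^ (m - j) ≠ 0 := pow_ne_zero _ hz
    have hwp : w ^ (j + 1) ≠ 0 := pow_ne_zero _ hw
    field_simp
    try ring
  rw [Finset.sum_congr rfl (fun j hj => by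
    simp only [MeasureTheory.integral_const_mul]
    exact hterm j hj)]
  rw [Finset.sum_neg_distrib]
  have := aux_alg m w z hw hz hzw
  have hsw : z - w = s - 1 := by rw [hz_def, hw_def]; ring
  rw [hsw] at this
  exact this
end

section
/- For every positive integer m, every real x ≥ 1, and every real y, one has (1/(m−1)!) · D^{m−1}[ w ↦ x^{w−iy}/(w−iy) ](1) = −∑_{j=0}^{m−1} x^{1−iy} (log x)^{m−1−j} / ((m−1−j)! · (iy−1)^{j+1}), where D^{m−1} denotes the (m−1)-st complex derivative (iterated derivative) and the function w ↦ x^{w−iy}/(w−iy) is evaluated at w = 1. -/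
open Finset Complex

private lemma dF_pascal (n j : ℕ) :
    (n+1).descFactorial j = n.descFactorial j + j * n.descFactorial (j-1) := by
  cases j with
  | zero => simp
  | succ k =>
    rw [Nat.succ_descFactorial_succ, Nat.descFactorial_succ, Nat.succ_sub_one]
    rcases le_or_gt k n with h | h
    · have : n + 1 = (n - k) + (k + 1) := by omega
      rw [this, add_mul]
    · rw [Nat.descFactorial_of_lt h]; simp

private lemma key (L c : ℂ) (n : ℕ) (w : ℂ) (hw : w ≠ c) :
    iteratedDeriv n (fun w : ℂ => Complex.exp (L * (w - c)) / (w - c)) w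
      = -∑ j ∈ range (n+1), (n.descFactorial j : ℂ) * Complex.exp (L * (w - c)) *
          L ^ (n - j) * (c - w) ^ (-(j+1 : ℤ)) := by
  induction n generalizing w with
  | zero =>
    have h1 : c - w ≠ 0 := sub_ne_zero.2 (Ne.symm hw)
    have h2 : w - c ≠ 0 := sub_ne_zero.2 hw
    simp only [iteratedDeriv_zero]
    norm_num
    field_simp
    ring
  | succ n ih =>
    have h1 : c - w ≠ 0 := sub_ne_zero.2 (Ne.symm hw)
    rw [iteratedDeriv_succ]
    have hev : iteratedDeriv n (fun w : ℂ => Complex.exp (L * (w - c)) / (w - c)) =ᶠ[nhds w]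
        (fun z => -∑ j ∈ range (n+1), (n.descFactorial j : ℂ) * Complex.exp (L * (z - c)) *
          L ^ (n - j) * (c - z) ^ (-(j+1 : ℤ))) := by
      filter_upwards [isOpen_compl_singleton.mem_nhds hw] with z hz
      exact ih z hz
    rw [hev.deriv_eq]
    have hterm : ∀ j : ℕ, HasDerivAt (fun z : ℂ => (n.descFactorial j : ℂ) *
        Complex.exp (L * (z - c)) * L ^ (n - j) * (c - z) ^ (-(j+1 : ℤ)))
        ((n.descFactorial j : ℂ) * Complex.exp (L * (w - c)) * L ^ (n - j) *
          (L * (c - w) ^ (-(j+1 : ℤ)) + ((j:ℂ)+1) * (c - w) ^ (-(j+2 : ℤ)))) w := by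
      intro j
      have hu : HasDerivAt (fun z : ℂ => (n.descFactorial j : ℂ) *
          Complex.exp (L * (z - c)) * L ^ (n - j))
          ((n.descFactorial j : ℂ) * (Complex.exp (L * (w - c)) * L) * L ^ (n - j)) w := by
        have : HasDerivAt (fun z : ℂ => L * (z - c)) L w := by
          simpa using (((hasDerivAt_id w).sub_const c).const_mul L)
        exact ((this.cexp).const_mul _).mul_const _
      have hv : HasDerivAt (fun z : ℂ => (c - z) ^ (-(j+1 : ℤ)))
          (((j:ℂ)+1) * (c - w) ^ (-(j+2 : ℤ))) w := by
        have hin : HasDerivAt (fun z : ℂ => c - z) (-1) w := by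
          simpa using ((hasDerivAt_id w).const_sub c)
        have := (hasDerivAt_zpow (-(j+1:ℤ)) (c - w) (Or.inl h1)).comp w hin
        refine HasDerivAt.congr_deriv this ?_
        push_cast
        have : (-(j+1:ℤ) - 1) = (-(j+2:ℤ)) := by ring
        rw [this]
        push_cast
        ring
      have := hu.mul hv
      refine HasDerivAt.congr_deriv this ?_
      ring
    have hsum := (HasDerivAt.fun_sum (fun j (_ : j ∈ range (n+1)) => hterm j)).fun_neg
    rw [hsum.deriv]
    congr 1
    -- pure sum identity
    have e1 : ∑ j ∈ range (n+1), (n.descFactorial j : ℂ) * Complex.exp (L * (w - c)) *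
          L ^ (n - j) * (L * (c - w) ^ (-(j+1 : ℤ)) + ((j:ℂ)+1) * (c - w) ^ (-(j+2 : ℤ)))
        = (∑ j ∈ range (n+1), (n.descFactorial j : ℂ) * Complex.exp (L * (w - c)) *
            L ^ (n + 1 - j) * (c - w) ^ (-(j+1 : ℤ)))
          + ∑ j ∈ range (n+1), ((j:ℂ)+1) * (n.descFactorial j : ℂ) *
            Complex.exp (L * (w - c)) * L ^ (n - j) * (c - w) ^ (-(j+2 : ℤ)) := by
      rw [← sum_add_distrib]
      refine sum_congr rfl fun j hj => ?_
      have hj' : j ≤ n := by simpa [Nat.lt_succ_iff] using hj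
      have h : n + 1 - j = (n - j) + 1 := by omega
      rw [h, pow_succ]
      ring
    rw [e1]
    have split : ∀ j ∈ range (n+2),
        ((n+1).descFactorial j : ℂ) * Complex.exp (L * (w - c)) * L ^ (n + 1 - j) *
          (c - w) ^ (-(j+1 : ℤ))
        = (n.descFactorial j : ℂ) * Complex.exp (L * (w - c)) * L ^ (n + 1 - j) *
          (c - w) ^ (-(j+1 : ℤ))
          + ((j : ℂ) * (n.descFactorial (j-1) : ℂ)) * Complex.exp (L * (w - c)) *
            L ^ (n + 1 - j) * (c - w) ^ (-(j+1 : ℤ)) := by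
      intro j _
      rw [dF_pascal]
      push_cast
      ring
    rw [sum_congr rfl split, sum_add_distrib]
    congr 1
    · conv_rhs => rw [sum_range_succ]
      rw [Nat.descFactorial_of_lt (Nat.lt_succ_self n)]
      simp
    · conv_rhs => rw [Finset.sum_range_succ']
      simp only [Nat.cast_zero, zero_mul, Nat.succ_sub_succ, add_zero, zero_add,
        Nat.cast_add, Nat.cast_one, Nat.add_sub_cancel]
      refine sum_congr rfl fun j hj => ?_
      push_cast
      simp only [Nat.sub_zero]
      ring

theorem stmt_13 (m : ℕ) (hm : 0 < m) (x y : ℝ) (hx : 1 ≤ x) :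
    (1 / (Nat.factorial (m - 1) : ℂ)) *
        iteratedDeriv (m - 1)
          (fun w : ℂ => (x : ℂ) ^ (w - (y : ℂ) * Complex.I) / (w - (y : ℂ) * Complex.I)) 1 =
      -∑ j ∈ Finset.range m,
          (x : ℂ) ^ (1 - (y : ℂ) * Complex.I) * (Real.log x : ℂ) ^ (m - 1 - j) /
            ((Nat.factorial (m - 1 - j) : ℂ) * ((y : ℂ) * Complex.I - 1) ^ (j + 1)) := by
  obtain ⟨n, rfl⟩ : ∃ n, m = n + 1 := ⟨m - 1, (Nat.succ_pred_eq_of_pos hm).symm⟩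
  have hx0 : (0:ℝ) < x := lt_of_lt_of_le one_pos hx
  set c : ℂ := (y:ℂ) * Complex.I with hc
  have hxne : (x:ℂ) ≠ 0 := Complex.ofReal_ne_zero.2 (ne_of_gt hx0)
  have hlog : Complex.log (x:ℂ) = (Real.log x : ℂ) := (Complex.ofReal_log hx0.le).symm
  have h1c : (1:ℂ) ≠ c := by
    intro h
    have := congrArg Complex.re h
    simp [hc] at this
  have hc1 : c - 1 ≠ 0 := by
    intro h
    have := congrArg Complex.re h
    simp [hc, Complex.sub_re] at this
  have hf : (fun w : ℂ => (x:ℂ) ^ (w - c) / (w - c))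
      = fun w : ℂ => Complex.exp ((Real.log x : ℂ) * (w - c)) / (w - c) := by
    funext w
    rw [Complex.cpow_def_of_ne_zero hxne, hlog]
  simp only [Nat.add_sub_cancel]
  rw [hf, key ((Real.log x : ℂ)) c n 1 h1c]
  rw [Complex.cpow_def_of_ne_zero hxne, hlog]
  rw [mul_neg, neg_inj, Finset.mul_sum]
  refine sum_congr rfl fun j hj => ?_
  have hj' : j ≤ n := by simpa [Nat.lt_succ_iff] using hj
  have hfact : ((n.factorial : ℂ)) = ((n-j).factorial : ℂ) * (n.descFactorial j : ℂ) := by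
    exact_mod_cast (Nat.factorial_mul_descFactorial hj').symm
  have hz : (c - 1) ^ (-(j+1:ℤ)) = ((c - 1)^(j+1))⁻¹ := by
    rw [show (-(j+1:ℤ)) = -((j+1:ℕ):ℤ) by push_cast; ring, zpow_neg, zpow_natCast]
  rw [hz]
  have hpow : (c - 1)^(j+1) ≠ 0 := pow_ne_zero _ hc1
  have hfac1 : ((n.factorial : ℂ)) ≠ 0 := Nat.cast_ne_zero.2 n.factorial_ne_zero
  have hfac2 : (((n-j).factorial : ℂ)) ≠ 0 := Nat.cast_ne_zero.2 (n-j).factorial_ne_zero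
  field_simp
  rw [hfact]
  ring
end

section
/- Fix δ > 0. Then there exists a constant C > 0 (depending only on δ) such that for all complex s with Re s ≥ δ, |Γ'(s)/Γ(s) − log s| ≤ C / (|Im s| + 2), where Γ is the complex Gamma function, Γ' its derivative, and log the principal branch of the complex logarithm. -/
open Complex Filter Topology Finset

namespace Stmt16

local notation "γ" => Real.eulerMascheroniConstant

noncomputable def KK (ε : ℝ) : ℝ := max 1 (4*(Real.log (1+1/ε) + Real.pi/2 + 1/ε))

lemma KK_pos (ε : ℝ) : 0 < KK ε := lt_of_lt_of_le one_pos (le_max_left _ _)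

/-! ### Elementary sum bounds -/

lemma sum_range_inv_sq_le {c : ℝ} (hc : 0 < c) (n : ℕ) :
    ∑ i ∈ Finset.range n, 1/((i:ℝ)+c)^2 ≤ 1/c^2 + 1/c := by
  match n with
  | 0 => simp; positivity
  | Nat.succ m =>
    rw [Finset.sum_range_succ']
    have h1 : ∑ i ∈ Finset.range m, 1/((↑(i+1):ℝ)+c)^2 ≤
        ∑ i ∈ Finset.range m, (1/((i:ℝ)+c) - 1/((↑(i+1):ℝ)+c)) := by
      apply Finset.sum_le_sum
      intro i _
      have hi : (0:ℝ) < (i:ℝ)+c := by positivity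
      have hi1 : (0:ℝ) < (↑(i+1):ℝ)+c := by positivity
      rw [div_sub_div _ _ hi.ne' hi1.ne', one_mul, mul_one]
      rw [div_le_div_iff₀ (by positivity) (by positivity)]
      have : ((↑(i+1):ℝ)+c) - ((i:ℝ)+c) = 1 := by push_cast; ring
      nlinarith [sq_nonneg ((i:ℝ)+c)]
    have h2 : ∑ i ∈ Finset.range m, (1/((i:ℝ)+c) - 1/((↑(i+1):ℝ)+c))
        = 1/((0:ℕ)+c) - 1/((m:ℝ)+c) :=
      Finset.sum_range_sub' (fun i => 1/((i:ℝ)+c)) m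
    have h3 : (0:ℝ) < (m:ℝ)+c := by positivity
    have h4 : 1/((m:ℝ)+c) ≥ 0 := by positivity
    push_cast at h1 h2 ⊢
    simp only [Nat.cast_zero, zero_add] at h2 ⊢
    nlinarith [h1, h2]

lemma summable_inv_sq {c : ℝ} (hc : 0 < c) : Summable (fun n : ℕ => 1/((n:ℝ)+c)^2) :=
  summable_of_sum_range_le (fun n => by positivity) (sum_range_inv_sq_le hc)

lemma tsum_inv_sq_le {c : ℝ} (hc : 0 < c) :
    ∑' n : ℕ, 1/((n:ℝ)+c)^2 ≤ 1/c^2 + 1/c :=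
  Summable.tsum_le_of_sum_range_le (summable_inv_sq hc) (sum_range_inv_sq_le hc)

/-! ### The basic term bound -/

lemma tAux_bound {ε : ℝ} (hε : 0 < ε) {z : ℂ} (hz : ε ≤ z.re) :
    ‖Complex.log (1 + z⁻¹) - z⁻¹‖ ≤ KK ε / ‖z‖^2 := by
  have hz0 : z ≠ 0 := fun h => by simp [h] at hz; linarith
  have hznorm : ε ≤ ‖z‖ := le_trans hz (le_trans (le_abs_self _) (Complex.abs_re_le_norm z))
  have hznpos : 0 < ‖z‖ := lt_of_lt_of_le hε hznorm
  rcases le_or_gt 2 ‖z‖ with h2 | h2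
  · -- large z
    have hw : ‖z⁻¹‖ ≤ 1/2 := by
      rw [norm_inv]
      rw [inv_le_comm₀ hznpos (by norm_num)]
      linarith
    have hw1 : ‖z⁻¹‖ < 1 := lt_of_le_of_lt hw (by norm_num)
    have := Complex.norm_log_one_add_sub_self_le hw1
    refine le_trans this ?_
    have h1 : (1 - ‖z⁻¹‖)⁻¹ ≤ 2 := by
      rw [inv_le_comm₀ (by linarith) (by norm_num)]
      linarith
    have h3 : ‖z⁻¹‖^2 * (1-‖z⁻¹‖)⁻¹ / 2 ≤ ‖z⁻¹‖^2 := by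
      nlinarith [sq_nonneg ‖z⁻¹‖, norm_nonneg (z⁻¹)]
    refine le_trans h3 ?_
    rw [norm_inv, inv_pow, inv_le_iff_one_le_mul₀ (by positivity), div_mul_eq_mul_div,
      le_div_iff₀ (by positivity)]
    have : (1:ℝ) ≤ KK ε := le_max_left _ _
    nlinarith [sq_nonneg ‖z‖]
  · -- small z
    have hnsq : 0 < Complex.normSq z := Complex.normSq_pos.mpr hz0
    have hzre : 0 < z.re := lt_of_lt_of_le hε hz
    have hrin : (0:ℝ) < (z⁻¹).re := by
      rw [Complex.inv_re]; positivity
    have hinvnorm : ‖z⁻¹‖ ≤ 1/ε := by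
      rw [norm_inv, one_div, inv_le_inv₀ hznpos hε]
      exact hznorm
    set ζ := 1 + z⁻¹ with hζ
    have hζre : 1 ≤ ζ.re := by rw [hζ, Complex.add_re, Complex.one_re]; linarith
    have habs1 : 1 ≤ ‖ζ‖ :=
      le_trans hζre (le_trans (le_abs_self _) (Complex.abs_re_le_norm ζ))
    have habs2 : ‖ζ‖ ≤ 1 + 1/ε := by
      calc ‖ζ‖ ≤ ‖(1:ℂ)‖ + ‖z⁻¹‖ := by
            simpa using norm_add_le (1:ℂ) z⁻¹
        _ ≤ 1 + 1/ε := by simp only [norm_one]; linarith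
    have hlogζ : ‖Complex.log ζ‖ ≤ Real.log (1+1/ε) + Real.pi/2 := by
      rw [Complex.log]
      refine le_trans (norm_add_le _ _) ?_
      have e1 : ‖(Real.log ‖ζ‖ : ℂ)‖ ≤ Real.log (1+1/ε) := by
        rw [Complex.norm_real, Real.norm_eq_abs,
          _root_.abs_of_nonneg (Real.log_nonneg habs1)]
        exact Real.log_le_log (by linarith) habs2
      have e2 : ‖(ζ.arg : ℂ) * Complex.I‖ ≤ Real.pi/2 := by
        rw [norm_mul, Complex.norm_I, mul_one, Complex.norm_real, Real.norm_eq_abs]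
        exact Complex.abs_arg_le_pi_div_two_iff.mpr (by linarith)
      linarith
    have hb : ‖Complex.log ζ - z⁻¹‖ ≤ Real.log (1+1/ε) + Real.pi/2 + 1/ε := by
      refine le_trans (norm_sub_le _ _) (by linarith)
    have hKK : 4*(Real.log (1+1/ε) + Real.pi/2 + 1/ε) ≤ KK ε := le_max_right _ _
    have hLnn : 0 ≤ Real.log (1+1/ε) + Real.pi/2 + 1/ε := by
      have h5 := Real.log_nonneg (by have := one_div_pos.mpr hε; linarith : (1:ℝ) ≤ 1+1/ε)
      have h6 := Real.pi_pos
      have h7 : (0:ℝ) ≤ 1/ε := by positivity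
      linarith
    rw [le_div_iff₀ (pow_pos hznpos 2)]
    have h4 : ‖z‖^2 ≤ 4 := by nlinarith [norm_nonneg z]
    have h8 := mul_le_mul hb h4 (sq_nonneg ‖z‖) hLnn
    linarith

/-! ### The series `Ffun` -/

noncomputable def Ffun (s : ℂ) : ℂ :=
  ∑' n : ℕ, (Complex.log (1 + ((n:ℂ)+s)⁻¹) - ((n:ℂ)+s)⁻¹)

lemma norm_sq_add (n : ℕ) (s : ℂ) : ‖(n:ℂ)+s‖^2 = ((n:ℝ)+s.re)^2 + s.im^2 := by
  rw [Complex.sq_norm, Complex.normSq_apply]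
  simp [Complex.add_re, Complex.add_im]
  ring

lemma re_nat_add {n : ℕ} {s : ℂ} : ((n:ℂ)+s).re = (n:ℝ) + s.re := by
  simp

lemma norm_nat_add_sq_ge {ε : ℝ} (hε : 0 < ε) {s : ℂ} (hs : ε ≤ s.re) (n : ℕ) :
    ((n:ℝ) + (s.re + |s.im|))^2 / 2 ≤ ‖(n:ℂ)+s‖^2 := by
  rw [norm_sq_add]
  have h1 : |s.im|^2 = s.im^2 := sq_abs _
  nlinarith [sq_nonneg (((n:ℝ)+s.re) - |s.im|), abs_nonneg s.im]

lemma norm_term_le {ε : ℝ} (hε : 0 < ε) {s : ℂ} (hs : ε ≤ s.re) (n : ℕ) :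
    ‖Complex.log (1 + ((n:ℂ)+s)⁻¹) - ((n:ℂ)+s)⁻¹‖ ≤
      (2 * KK ε) * (1/((n:ℝ) + (s.re + |s.im|))^2) := by
  set c := s.re + |s.im| with hc
  have hcpos : 0 < c := by have h := abs_nonneg s.im; simp only [hc]; linarith
  have hre : ε ≤ ((n:ℂ)+s).re := by
    rw [re_nat_add]; have : (0:ℝ) ≤ n := Nat.cast_nonneg n; linarith
  refine le_trans (tAux_bound hε hre) ?_
  have h1 := norm_nat_add_sq_ge hε hs n
  have h2 : (0:ℝ) < ((n:ℝ)+c)^2/2 := by positivity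
  have h3 : 0 < ‖(n:ℂ)+s‖^2 := lt_of_lt_of_le h2 h1
  rw [div_le_iff₀ h3]
  have h4 : (2*KK ε) * (1/((n:ℝ)+c)^2) * (((n:ℝ)+c)^2/2) = KK ε := by
    field_simp
  calc KK ε = (2*KK ε) * (1/((n:ℝ)+c)^2) * (((n:ℝ)+c)^2/2) := h4.symm
    _ ≤ (2*KK ε) * (1/((n:ℝ)+c)^2) * ‖(n:ℂ)+s‖^2 := by
        apply mul_le_mul_of_nonneg_left h1
        have := KK_pos ε
        positivity

lemma summable_norm_term {ε : ℝ} (hε : 0 < ε) {s : ℂ} (hs : ε ≤ s.re) :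
    Summable (fun n : ℕ => ‖Complex.log (1 + ((n:ℂ)+s)⁻¹) - ((n:ℂ)+s)⁻¹‖) := by
  have hcpos : 0 < s.re + |s.im| := lt_of_lt_of_le hε (by have := abs_nonneg s.im; linarith)
  exact Summable.of_nonneg_of_le (fun n => norm_nonneg _) (norm_term_le hε hs)
    (((summable_inv_sq hcpos)).mul_left _)

lemma summable_term {ε : ℝ} (hε : 0 < ε) {s : ℂ} (hs : ε ≤ s.re) :
    Summable (fun n : ℕ => Complex.log (1 + ((n:ℂ)+s)⁻¹) - ((n:ℂ)+s)⁻¹) :=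
  (summable_norm_term hε hs).of_norm

lemma Ffun_norm_le {ε : ℝ} (hε : 0 < ε) {s : ℂ} (hs : ε ≤ s.re) :
    ‖Ffun s‖ ≤ (2*KK ε) * (1/(s.re+|s.im|)^2 + 1/(s.re+|s.im|)) := by
  set c := s.re + |s.im| with hc
  have hcpos : 0 < c := by have h := abs_nonneg s.im; simp only [hc]; linarith
  refine le_trans (norm_tsum_le_tsum_norm (summable_norm_term hε hs)) ?_
  have h1 : ∑' n : ℕ, ‖Complex.log (1 + ((n:ℂ)+s)⁻¹) - ((n:ℂ)+s)⁻¹‖ ≤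
      ∑' n : ℕ, (2*KK ε) * (1/((n:ℝ)+c)^2) :=
    Summable.tsum_le_tsum (norm_term_le hε hs) (summable_norm_term hε hs)
      ((summable_inv_sq hcpos).mul_left _)
  rw [tsum_mul_left] at h1
  refine le_trans h1 ?_
  have := KK_pos ε
  have h2 := tsum_inv_sq_le hcpos
  nlinarith [tsum_inv_sq_le hcpos]

lemma Ffun_diffOn {ε : ℝ} (hε : 0 < ε) :
    DifferentiableOn ℂ Ffun {z : ℂ | ε < z.re} := by
  apply differentiableOn_tsum_of_summable_norm
    ((summable_inv_sq hε).mul_left (2*KK ε))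
  · intro n
    intro z hz
    have hz' : 0 < ((n:ℂ)+z).re := by
      rw [re_nat_add]
      have : (0:ℝ) ≤ n := Nat.cast_nonneg n
      have : ε < z.re := hz
      linarith
    have hne : (n:ℂ)+z ≠ 0 := fun h => by rw [h] at hz'; simp at hz'
    have hd1 : DifferentiableAt ℂ (fun w : ℂ => (n:ℂ)+w) z := by fun_prop
    have hd2 : DifferentiableAt ℂ (fun w : ℂ => ((n:ℂ)+w)⁻¹) z := hd1.inv hne
    apply DifferentiableAt.differentiableWithinAt
    apply DifferentiableAt.sub _ hd2
    apply DifferentiableAt.clog (by fun_prop)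
    · rw [Complex.mem_slitPlane_iff]
      left
      have h3 : 0 < Complex.normSq ((n:ℂ)+z) := Complex.normSq_pos.mpr hne
      have h4 : 0 ≤ ((n:ℂ)+z).re / Complex.normSq ((n:ℂ)+z) := div_nonneg hz'.le h3.le
      rw [Complex.add_re, Complex.one_re, Complex.inv_re]
      linarith
  · exact isOpen_lt continuous_const Complex.continuous_re
  · intro n w hw
    refine le_trans (norm_term_le hε (le_of_lt hw) n) ?_
    have h5 : ε ≤ w.re + |w.im| := by
      have h6 : ε < w.re := hw
      have := abs_nonneg w.im
      linarith
    have h7 : (0:ℝ) < (n:ℝ) + ε := by positivity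
    apply mul_le_mul_of_nonneg_left _ (by have := KK_pos ε; positivity)
    have h8 : (0:ℝ) < (n:ℝ) + (w.re + |w.im|) := by
      have := Nat.cast_nonneg (α := ℝ) n; linarith
    rw [div_le_div_iff₀ (pow_pos h8 2) (pow_pos h7 2)]
    nlinarith [Nat.cast_nonneg (α := ℝ) n]

/-! ### Real digamma facts -/

lemma real_ne_neg_nat {x : ℝ} (hx : 0 < x) : ∀ m : ℕ, (x:ℂ) ≠ -(m:ℕ) := by
  intro m h
  have hxm : x = -(m:ℝ) := by
    have := congrArg Complex.re h
    simpa using this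
  have : (0:ℝ) ≤ (m:ℝ) := Nat.cast_nonneg m
  linarith [hxm]

lemma deriv_complex_Gamma_real {x : ℝ} (hx : 0 < x) :
    deriv Complex.Gamma (x:ℂ) = ((deriv Real.Gamma x : ℝ) : ℂ) := by
  have hne := real_ne_neg_nat hx
  have hd : HasDerivAt Complex.Gamma (deriv Complex.Gamma ↑x) ↑x :=
    (Complex.differentiableAt_Gamma _ hne).hasDerivAt
  set d := deriv Complex.Gamma (x:ℂ) with hdd
  have hre : deriv Real.Gamma x = d.re := by
    have h1 := hd.real_of_complex
    have h2 : (fun y : ℝ => (Complex.Gamma (y:ℂ)).re) = Real.Gamma := by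
      funext y; rw [Complex.Gamma_ofReal, Complex.ofReal_re]
    rw [h2] at h1
    exact h1.deriv
  have hslope := hasDerivAt_iff_tendsto_slope.mp hd
  have hmap : Tendsto (fun h : ℝ => (x:ℂ) + (h:ℂ)) (𝓝[≠] (0:ℝ)) (𝓝[≠] (x:ℂ)) := by
    apply tendsto_nhdsWithin_of_tendsto_nhds_of_eventually_within
    · have h3 : Tendsto (fun h : ℝ => (x:ℂ) + (h:ℂ)) (𝓝 (0:ℝ)) (𝓝 ((x:ℂ) + ((0:ℝ):ℂ))) :=
        (continuous_const.add Complex.continuous_ofReal).tendsto 0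
      simpa using h3.mono_left nhdsWithin_le_nhds
    · filter_upwards [self_mem_nhdsWithin] with h hh
      simp only [Set.mem_compl_iff, Set.mem_singleton_iff] at hh ⊢
      intro hc
      apply hh
      have : (h:ℂ) = 0 := by linear_combination hc
      exact_mod_cast this
  have hT : Tendsto (fun h : ℝ => slope Complex.Gamma ↑x (↑x + ↑h)) (𝓝[≠](0:ℝ)) (𝓝 d) :=
    hslope.comp hmap
  have hTim : Tendsto (fun h : ℝ => (slope Complex.Gamma ↑x (↑x + ↑h)).im) (𝓝[≠](0:ℝ)) (𝓝 d.im) :=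
    (Complex.continuous_im.tendsto d).comp hT
  have heq : ∀ᶠ h : ℝ in 𝓝[≠](0:ℝ), (slope Complex.Gamma ↑x (↑x + ↑h)).im = 0 := by
    filter_upwards [self_mem_nhdsWithin] with h hh
    have e1 : ((x:ℂ) + (h:ℂ)) = ((x + h : ℝ) : ℂ) := by push_cast; ring
    have e2 : ((x + h : ℝ) : ℂ) - (x:ℂ) = ((h:ℝ):ℂ) := by push_cast; ring
    rw [slope_def_field, e1, e2, Complex.Gamma_ofReal, Complex.Gamma_ofReal,
      ← Complex.ofReal_sub, ← Complex.ofReal_div, Complex.ofReal_im]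
  have him : d.im = 0 :=
    tendsto_nhds_unique hTim (tendsto_const_nhds.congr'
      (heq.mono fun h hh => hh.symm))
  apply Complex.ext
  · rw [Complex.ofReal_re, hre]
  · rw [Complex.ofReal_im, him]

noncomputable def ψr : ℝ → ℝ := deriv (fun y : ℝ => Real.log (Real.Gamma y))

lemma ψr_eq {y : ℝ} (hy : 0 < y) : ψr y = deriv Real.Gamma y / Real.Gamma y := by
  unfold ψr
  exact deriv.log (Real.differentiableAt_Gamma (fun m => by
      have : (0:ℝ) ≤ m := Nat.cast_nonneg m
      intro h; rw [h] at hy; linarith))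
    (Real.Gamma_ne_zero (fun m => by
      have : (0:ℝ) ≤ m := Nat.cast_nonneg m
      intro h; rw [h] at hy; linarith))

lemma ψr_mono : MonotoneOn ψr (Set.Ioi (0:ℝ)) := by
  apply Real.convexOn_log_Gamma.monotoneOn_deriv
  intro y hy
  have hy' : (0:ℝ) < y := hy
  apply DifferentiableAt.comp
  · exact Real.differentiableAt_log (Real.Gamma_ne_zero (fun m => by
      have : (0:ℝ) ≤ m := Nat.cast_nonneg m
      intro h; rw [h] at hy'; linarith))
  · exact Real.differentiableAt_Gamma (fun m => by
      have : (0:ℝ) ≤ m := Nat.cast_nonneg m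
      intro h; rw [h] at hy'; linarith)

lemma ψr_nat (n : ℕ) : ψr (n + 1) = -γ + harmonic n := by
  have h1 : ψr ((n:ℝ) + 1) = deriv Real.Gamma ((n:ℝ)+1) / Real.Gamma ((n:ℝ)+1) :=
    ψr_eq (by positivity)
  rw [h1, Real.deriv_Gamma_nat, Real.Gamma_nat_eq_factorial]
  have h2 : ((Nat.factorial n : ℝ)) ≠ 0 := by positivity
  field_simp

lemma log_succ_sub_log : Tendsto (fun n : ℕ => Real.log ((n:ℝ)+1) - Real.log n) atTop (𝓝 0) := by
  have h1 : Tendsto (fun n : ℕ => 1 + 1/(n:ℝ)) atTop (𝓝 1) := by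
    have := tendsto_one_div_atTop_nhds_zero_nat (𝕜 := ℝ)
    simpa using tendsto_const_nhds.add this
  have h2 := (Real.continuousAt_log (by norm_num : (1:ℝ) ≠ 0)).tendsto.comp h1
  rw [Real.log_one] at h2
  apply h2.congr'
  filter_upwards [eventually_ge_atTop 1] with n hn
  have hn' : (0:ℝ) < n := by exact_mod_cast hn
  rw [Function.comp_apply, ← Real.log_div (by positivity) hn'.ne']
  congr 1
  field_simp

lemma seqA : Tendsto (fun m : ℕ => (-γ + (harmonic m : ℝ)) - Real.log m) atTop (𝓝 0) := by
  have h := (Real.tendsto_harmonic_sub_log_add_one.sub_const γ).add log_succ_sub_log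
  have h2 : (γ - γ + 0 : ℝ) = 0 := by ring
  rw [h2] at h
  exact h.congr (fun m => by push_cast; ring)

lemma seqB : Tendsto (fun m : ℕ => (-γ + (harmonic (m-1) : ℝ)) - Real.log ((m:ℝ)+1)) atTop (𝓝 0) := by
  rw [← tendsto_add_atTop_iff_nat 1]
  have hlog2 : Tendsto (fun m : ℕ => Real.log ((m:ℝ)+2) - Real.log ((m:ℝ)+1)) atTop (𝓝 0) := by
    have := log_succ_sub_log.comp (tendsto_add_atTop_nat 1)
    apply this.congr
    intro m
    simp only [Function.comp_apply]
    push_cast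
    ring_nf
  have h := (Real.tendsto_harmonic_sub_log_add_one.sub_const γ).sub hlog2
  have h2 : (γ - γ - 0 : ℝ) = 0 := by ring
  rw [h2] at h
  apply h.congr
  intro m
  simp only [Nat.add_sub_cancel]
  push_cast
  ring

lemma ψr_sub_log_tendsto : Tendsto (fun y : ℝ => ψr y - Real.log y) atTop (𝓝 0) := by
  have hU := seqA.comp tendsto_nat_floor_atTop (α := ℝ)
  have hL := seqB.comp tendsto_nat_floor_atTop (α := ℝ)
  apply tendsto_of_tendsto_of_tendsto_of_le_of_le' hL hU
  · -- lower bound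
    filter_upwards [eventually_ge_atTop (2:ℝ)] with y hy
    set m := ⌊y⌋₊ with hm
    have hm2 : 2 ≤ m := Nat.le_floor (by exact_mod_cast hy)
    have hmy : (m:ℝ) ≤ y := Nat.floor_le (by linarith)
    have hym : y ≤ (m:ℝ) + 1 := (Nat.lt_floor_add_one y).le
    have hmpos : (0:ℝ) < m := by
      have : (2:ℝ) ≤ m := by exact_mod_cast hm2
      linarith
    have hψ : ψr m ≤ ψr y :=
      ψr_mono (Set.mem_Ioi.mpr hmpos) (Set.mem_Ioi.mpr (by linarith)) hmy
    have hψm : ψr m = -γ + harmonic (m-1) := by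
      have h3 := ψr_nat (m-1)
      have h4 : ((m-1 : ℕ):ℝ) + 1 = (m:ℝ) := by
        rw [Nat.cast_sub (by omega)]; ring
      rw [h4] at h3
      exact h3
    have hlog : Real.log y ≤ Real.log ((m:ℝ)+1) :=
      Real.log_le_log (by linarith) hym
    simp only [Function.comp_apply]
    rw [← hm] at *
    linarith [hψm ▸ hψ]
  · -- upper bound
    filter_upwards [eventually_ge_atTop (2:ℝ)] with y hy
    set m := ⌊y⌋₊ with hm
    have hm2 : 2 ≤ m := Nat.le_floor (by exact_mod_cast hy)
    have hmy : (m:ℝ) ≤ y := Nat.floor_le (by linarith)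
    have hym : y ≤ (m:ℝ) + 1 := (Nat.lt_floor_add_one y).le
    have hmpos : (0:ℝ) < m := by
      have : (2:ℝ) ≤ m := by exact_mod_cast hm2
      linarith
    have hψ : ψr y ≤ ψr ((m:ℝ)+1) :=
      ψr_mono (Set.mem_Ioi.mpr (by linarith)) (Set.mem_Ioi.mpr (by linarith)) hym
    have hψm : ψr ((m:ℝ)+1) = -γ + harmonic m := ψr_nat m
    have hlog : Real.log (m:ℝ) ≤ Real.log y := Real.log_le_log hmpos hmy
    simp only [Function.comp_apply]
    rw [← hm] at *
    linarith [hψm ▸ hψ]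

/-! ### Complex identities -/

lemma logDeriv_Gamma_real {y : ℝ} (hy : 0 < y) :
    logDeriv Complex.Gamma (y:ℂ) = ((ψr y : ℝ) : ℂ) := by
  rw [logDeriv_apply, deriv_complex_Gamma_real hy, Complex.Gamma_ofReal,
    ← Complex.ofReal_div, ψr_eq hy]

lemma logDeriv_Gamma_rec {s : ℂ} (hs : 0 < s.re) :
    logDeriv Complex.Gamma (s+1) = logDeriv Complex.Gamma s + s⁻¹ := by
  have hs0 : s ≠ 0 := fun h => by rw [h] at hs; simp at hs
  have hG : Complex.Gamma s ≠ 0 := Complex.Gamma_ne_zero_of_re_pos hs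
  have hne : ∀ m : ℕ, s ≠ -(m:ℕ) := by
    intro m h
    have hsre : s.re = -(m:ℝ) := by rw [h]; simp
    have h2 : (0:ℝ) ≤ (m:ℝ) := Nat.cast_nonneg m
    rw [hsre] at hs; linarith
  have hne1 : ∀ m : ℕ, s + 1 ≠ -(m:ℕ) := by
    intro m h
    have hsre : s.re + 1 = -(m:ℝ) := by
      have := congrArg Complex.re h; simpa using this
    have h2 : (0:ℝ) ≤ (m:ℝ) := Nat.cast_nonneg m
    linarith
  have hdG : DifferentiableAt ℂ Complex.Gamma s := Complex.differentiableAt_Gamma _ hne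
  have hdG1 : DifferentiableAt ℂ Complex.Gamma (s+1) := Complex.differentiableAt_Gamma _ hne1
  have h1 : logDeriv (fun z : ℂ => Complex.Gamma (z+1)) s = logDeriv Complex.Gamma (s+1) := by
    have h0 := logDeriv_comp (f := Complex.Gamma) (g := fun z : ℂ => z + 1) (x := s)
      hdG1 (by fun_prop)
    have h0' : (Complex.Gamma ∘ fun z : ℂ => z + 1) = (fun z : ℂ => Complex.Gamma (z+1)) := rfl
    rw [h0'] at h0
    rw [h0]
    simp [deriv_add_const]
  have h2 : logDeriv (fun z : ℂ => z * Complex.Gamma z) s = s⁻¹ + logDeriv Complex.Gamma s := by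
    rw [logDeriv_mul s hs0 hG (by fun_prop) hdG]
    simp [one_div]
  have heq : (fun z : ℂ => Complex.Gamma (z+1)) =ᶠ[𝓝 s] (fun z : ℂ => z * Complex.Gamma z) := by
    filter_upwards [eventually_ne_nhds hs0] with z hz
    exact Complex.Gamma_add_one z hz
  have h3 : logDeriv (fun z : ℂ => Complex.Gamma (z+1)) s
      = logDeriv (fun z : ℂ => z * Complex.Gamma z) s := by
    rw [logDeriv_apply, logDeriv_apply, heq.deriv_eq, Complex.Gamma_add_one s hs0]
  rw [← h1, h3, h2]
  ring

lemma log_rec {s : ℂ} (hs : 0 < s.re) :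
    Complex.log (s+1) = Complex.log s + Complex.log (1+s⁻¹) := by
  have hs0 : s ≠ 0 := fun h => by rw [h] at hs; simp at hs
  have hinv_re : 0 < (s⁻¹).re := by
    rw [Complex.inv_re]
    have := Complex.normSq_pos.mpr hs0
    positivity
  have hw : (0:ℝ) < (1+s⁻¹).re := by
    rw [Complex.add_re, Complex.one_re]; linarith
  have hw0 : (1:ℂ) + s⁻¹ ≠ 0 := fun h => by rw [h] at hw; simp at hw
  have hmul : s + 1 = s * (1 + s⁻¹) := by field_simp
  rw [hmul]
  apply Complex.log_mul hs0 hw0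
  have h1 : |Complex.arg s| < Real.pi/2 :=
    Complex.abs_arg_lt_pi_div_two_iff.mpr (Or.inl hs)
  have h2 : |Complex.arg (1+s⁻¹)| < Real.pi/2 :=
    Complex.abs_arg_lt_pi_div_two_iff.mpr (Or.inl hw)
  constructor
  · cases' abs_lt.mp h1 with h1a _
    cases' abs_lt.mp h2 with h2a _
    linarith
  · cases' abs_lt.mp h1 with _ h1b
    cases' abs_lt.mp h2 with _ h2b
    linarith [Real.pi_pos]

lemma Ffun_rec {s : ℂ} (hs : 0 < s.re) :
    Ffun s = (Complex.log (1 + s⁻¹) - s⁻¹) + Ffun (s+1) := by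
  have hsum := summable_term hs (le_refl s.re)
  rw [Ffun, Summable.tsum_eq_zero_add hsum]
  congr 1
  · norm_num
  · rw [Ffun]
    apply tsum_congr
    intro n
    have h1 : ((↑(n+1):ℂ)) + s = (n:ℂ) + (s+1) := by push_cast; ring
    rw [h1]

/-! ### The function E and the identity -/

noncomputable def Efun (s : ℂ) : ℂ := logDeriv Complex.Gamma s - Complex.log s - Ffun s

lemma Efun_rec {s : ℂ} (hs : 0 < s.re) : Efun (s+1) = Efun s := by
  unfold Efun
  rw [logDeriv_Gamma_rec hs, log_rec hs, Ffun_rec hs]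
  ring

lemma Efun_diffOn : DifferentiableOn ℂ Efun {z : ℂ | 0 < z.re} := by
  have hU : IsOpen {z : ℂ | (0:ℝ) < z.re} := isOpen_lt continuous_const Complex.continuous_re
  have hGne : ∀ z : ℂ, 0 < z.re → ∀ m : ℕ, z ≠ -(m:ℕ) := by
    intro z hz m h
    have hre : z.re = -(m:ℝ) := by rw [h]; simp
    have h2 : (0:ℝ) ≤ (m:ℝ) := Nat.cast_nonneg m
    rw [hre] at hz; linarith
  have hG : DifferentiableOn ℂ Complex.Gamma {z : ℂ | 0 < z.re} := fun z hz =>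
    (Complex.differentiableAt_Gamma z (hGne z hz)).differentiableWithinAt
  have hG' : DifferentiableOn ℂ (deriv Complex.Gamma) {z : ℂ | 0 < z.re} :=
    ((hG.analyticOnNhd hU).deriv).differentiableOn
  apply DifferentiableOn.sub
  apply DifferentiableOn.sub
  · have h1 : DifferentiableOn ℂ (fun z => deriv Complex.Gamma z / Complex.Gamma z)
        {z : ℂ | 0 < z.re} :=
      hG'.div hG (fun z hz => Complex.Gamma_ne_zero_of_re_pos hz)
    exact h1
  · intro z hz
    exact (Complex.differentiableAt_log (Complex.mem_slitPlane_iff.mpr (Or.inl hz))).differentiableWithinAt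
  · intro z hz
    have hz' : (0:ℝ) < z.re := hz
    have h2 : z ∈ {w : ℂ | z.re/2 < w.re} := by
      simp only [Set.mem_setOf_eq]; linarith
    exact ((Ffun_diffOn (half_pos hz')).differentiableAt
      ((isOpen_lt continuous_const Complex.continuous_re).mem_nhds h2)).differentiableWithinAt

lemma Efun_real_zero {x : ℝ} (hx : 0 < x) : Efun ((x:ℝ):ℂ) = 0 := by
  have hshift : ∀ n : ℕ, Efun ((x:ℝ):ℂ) = Efun (((x + n : ℝ)):ℂ) := by
    intro n
    induction n with
    | zero => norm_num
    | succ k ih =>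
      rw [ih]
      have hre : (0:ℝ) < ((x + (k:ℝ) : ℝ):ℂ).re := by rw [Complex.ofReal_re]; positivity
      rw [(Efun_rec hre).symm]
      congr 1
      push_cast
      ring
  -- the norm tends to zero
  have hyy : Tendsto (fun n : ℕ => x + (n:ℝ)) atTop atTop :=
    tendsto_atTop_add_const_left atTop x tendsto_natCast_atTop_atTop
  have hA : Tendsto (fun n : ℕ => |ψr (x+n) - Real.log (x+n)|) atTop (𝓝 0) := by
    have h := (ψr_sub_log_tendsto.comp hyy).abs
    simpa using h
  have hB : Tendsto (fun n : ℕ => 2*KK 1*(1/(x+(n:ℝ))^2 + 1/(x+(n:ℝ)))) atTop (𝓝 0) := by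
    have l1 : Tendsto (fun y : ℝ => 1/y^2) atTop (𝓝 0) := by
      have := (tendsto_pow_atTop (two_ne_zero)).inv_tendsto_atTop (𝕜 := ℝ)
      simpa [one_div, Pi.inv_def] using this
    have l2 : Tendsto (fun y : ℝ => 1/y) atTop (𝓝 0) := by
      simpa [one_div] using tendsto_inv_atTop_zero (𝕜 := ℝ)
    have h1 : Tendsto (fun y : ℝ => 2*KK 1*(1/y^2 + 1/y)) atTop (𝓝 0) := by
      have := (l1.add l2).const_mul (2*KK 1)
      simpa using this
    exact h1.comp hyy
  have hlim : Tendsto (fun n : ℕ => ‖Efun (((x + n:ℝ)):ℂ)‖) atTop (𝓝 0) := by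
    have h0 : Tendsto (fun n : ℕ => |ψr (x+n) - Real.log (x+n)|
        + 2*KK 1*(1/(x+(n:ℝ))^2 + 1/(x+(n:ℝ)))) atTop (𝓝 0) := by
      have := hA.add hB
      simpa using this
    apply tendsto_of_tendsto_of_tendsto_of_le_of_le'
      (tendsto_const_nhds (x := (0:ℝ))) h0
    · exact Eventually.of_forall (fun n => norm_nonneg _)
    · have hev : ∀ᶠ n : ℕ in atTop, (1:ℝ) ≤ x + n := by
        filter_upwards [hyy.eventually_ge_atTop 1] with n hn using hn
      filter_upwards [hev] with n hn
      set y := x + (n:ℝ) with hy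
      have hy0 : 0 < y := by linarith
      have hE : Efun ((y:ℝ):ℂ) = (((ψr y - Real.log y : ℝ)):ℂ) - Ffun ((y:ℝ):ℂ) := by
        unfold Efun
        rw [logDeriv_Gamma_real hy0, ← Complex.ofReal_log hy0.le]
        push_cast
        ring
      rw [hE]
      refine le_trans (norm_sub_le _ _) ?_
      have hre : (1:ℝ) ≤ ((y:ℝ):ℂ).re := by rw [Complex.ofReal_re]; exact hn
      have hFb := Ffun_norm_le one_pos hre
      rw [Complex.ofReal_re, Complex.ofReal_im] at hFb
      simp only [abs_zero, add_zero] at hFb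
      have : ‖(((ψr y - Real.log y : ℝ)):ℂ)‖ = |ψr y - Real.log y| := by
        rw [Complex.norm_real, Real.norm_eq_abs]
      rw [this]
      linarith
  have hconst : (fun n : ℕ => ‖Efun (((x + n:ℝ)):ℂ)‖) = fun _ => ‖Efun ((x:ℝ):ℂ)‖ :=
    funext fun n => by rw [← hshift n]
  rw [hconst] at hlim
  have h := tendsto_nhds_unique tendsto_const_nhds hlim
  exact norm_eq_zero.mp h

lemma Efun_eq_zero {s : ℂ} (hs : 0 < s.re) : Efun s = 0 := by
  have hU : IsOpen {z : ℂ | (0:ℝ) < z.re} := isOpen_lt continuous_const Complex.continuous_re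
  have hconn : IsPreconnected {z : ℂ | (0:ℝ) < z.re} :=
    (convex_halfSpace_re_gt 0).isPreconnected
  have hanal : AnalyticOnNhd ℂ Efun {z : ℂ | (0:ℝ) < z.re} :=
    Efun_diffOn.analyticOnNhd hU
  have hzero : AnalyticOnNhd ℂ (fun _ : ℂ => (0:ℂ)) {z : ℂ | (0:ℝ) < z.re} :=
    analyticOnNhd_const
  have hmem : (2:ℂ) ∈ {z : ℂ | (0:ℝ) < z.re} := by norm_num
  have hseq : Tendsto (fun n : ℕ => (((2 + 1/(n+1) : ℝ)):ℂ)) atTop (𝓝[≠] (2:ℂ)) := by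
    apply tendsto_nhdsWithin_of_tendsto_nhds_of_eventually_within
    · have h1 : Tendsto (fun n : ℕ => (2 + 1/((n:ℝ)+1) : ℝ)) atTop (𝓝 2) := by
        have := tendsto_one_div_add_atTop_nhds_zero_nat (𝕜 := ℝ)
        simpa using tendsto_const_nhds.add this
      have h2 := (Complex.continuous_ofReal.tendsto 2).comp h1
      have h6 : ((2:ℝ):ℂ) = (2:ℂ) := by norm_num
      rw [← h6]
      exact h2.congr (fun n => rfl)
    · apply Eventually.of_forall
      intro n
      simp only [Set.mem_compl_iff, Set.mem_singleton_iff]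
      intro h
      have h3 : (2 + 1/((n:ℝ)+1) : ℝ) = 2 := by exact_mod_cast h
      have h4 : (0:ℝ) < 1/((n:ℝ)+1) := by positivity
      linarith
  have hfreq : ∃ᶠ z in 𝓝[≠] (2:ℂ), Efun z = (fun _ : ℂ => (0:ℂ)) z := by
    apply hseq.frequently
    apply Frequently.of_forall
    intro n
    exact Efun_real_zero (by positivity)
  exact hanal.eqOn_of_preconnected_of_frequently_eq hzero hconn hmem hfreq hs

end Stmt16

theorem stmt_16 (δ : ℝ) (hδ : 0 < δ) :
    ∃ C > 0, ∀ s : ℂ, δ ≤ s.re →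
      ‖deriv Complex.Gamma s / Complex.Gamma s - Complex.log s‖ ≤
        C / (|s.im| + 2) := by
  refine ⟨2*Stmt16.KK δ*(1+1/δ)*(δ+2)/δ, by have := Stmt16.KK_pos δ; positivity, ?_⟩
  intro s hs
  have hs0 : 0 < s.re := lt_of_lt_of_le hδ hs
  have hid : deriv Complex.Gamma s / Complex.Gamma s - Complex.log s = Stmt16.Ffun s := by
    have h := Stmt16.Efun_eq_zero hs0
    unfold Stmt16.Efun at h
    rw [logDeriv_apply] at h
    linear_combination h
  rw [hid]
  have hb := Stmt16.Ffun_norm_le hδ hs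
  set c := s.re + |s.im| with hc
  have habs := abs_nonneg s.im
  have hc1 : δ + |s.im| ≤ c := by simp only [hc]; linarith
  have hcpos : 0 < c := by linarith
  have key : 1/c ≤ (δ+2)/(δ*(|s.im|+2)) := by
    rw [div_le_div_iff₀ hcpos (by positivity)]
    nlinarith
  have key2 : 1/c^2 ≤ (1/δ)*(1/c) := by
    rw [one_div, one_div, one_div, ← mul_inv]
    apply inv_anti₀ (by positivity)
    nlinarith
  have hKK := Stmt16.KK_pos δ
  calc ‖Stmt16.Ffun s‖ ≤ 2*Stmt16.KK δ*(1/c^2 + 1/c) := hb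
    _ ≤ 2*Stmt16.KK δ*((1+1/δ)*(1/c)) := by nlinarith
    _ ≤ 2*Stmt16.KK δ*((1+1/δ)*((δ+2)/(δ*(|s.im|+2)))) := by
        apply mul_le_mul_of_nonneg_left _ (by positivity)
        apply mul_le_mul_of_nonneg_left key (by positivity)
    _ = (2*Stmt16.KK δ*(1+1/δ)*(δ+2)/δ)/(|s.im|+2) := by
        field_simp
end

section
/- Fix a positive integer k. For every complex s with Re s > 1, the Dirichlet series ∑_{n=1}^∞ Λ_k(n)/n^s converges and equals (−1)^k · ζ^{(k)}(s)/ζ(s), where ζ^{(k)} denotes the k-th derivative of the Riemann zeta function. -/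
open Finset ArithmeticFunction
open scoped LSeries.notation

/-- The generalized von Mangoldt function `Λ_k(n) = ∑_{d ∣ n} μ(d) (log (n/d))^k`. -/
noncomputable def genVonMangoldt (k : ℕ) (n : ℕ) : ℝ :=
  ∑ d ∈ n.divisors, (ArithmeticFunction.moebius d : ℝ) * (Real.log ((n / d : ℕ) : ℝ)) ^ k

lemma logMul_iterate (k : ℕ) (n : ℕ) :
    (LSeries.logMul^[k] (1 : ℕ → ℂ)) n = (Complex.log n) ^ k := by
  induction k with
  | zero => simp
  | succ m ih =>
    rw [Function.iterate_succ', Function.comp_apply, LSeries.logMul, ih, pow_succ, mul_comm]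

theorem stmt_19 (k : ℕ) (hk : 0 < k) (s : ℂ) (hs : 1 < s.re) :
    HasSum (fun n : ℕ => (genVonMangoldt k n : ℂ) / (n : ℂ) ^ s)
      ((-1) ^ k * (iteratedDeriv k riemannZeta s / riemannZeta s)) := by
  have hs' : LSeries.abscissaOfAbsConv (1 : ℕ → ℂ) < s.re := by
    rw [LSeries.abscissaOfAbsConv_one]; exact_mod_cast hs
  set g : ℕ → ℂ := LSeries.logMul^[k] (1 : ℕ → ℂ) with hg
  -- summability of g and μ
  have hgsum : LSeriesSummable g s :=
    LSeriesSummable_of_abscissaOfAbsConv_lt_re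
      (by rw [hg, LSeries.absicssaOfAbsConv_logPowMul]; exact hs')
  have hμsum : LSeriesSummable (fun n => (ArithmeticFunction.moebius n : ℂ)) s :=
    LSeriesSummable_moebius_iff.mpr hs
  -- values
  have hzne : riemannZeta s ≠ 0 := riemannZeta_ne_zero_of_one_lt_re hs
  have hμval : LSeries (fun n => (ArithmeticFunction.moebius n : ℂ)) s = (riemannZeta s)⁻¹ := by
    have h1 := LSeries_one_mul_Lseries_moebius hs
    rw [LSeries_one_eq_riemannZeta hs] at h1
    field_simp at h1 ⊢
    linear_combination h1
  have hgval : LSeries g s = (-1) ^ k * iteratedDeriv k riemannZeta s := by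
    have hEq : riemannZeta =ᶠ[nhds s] LSeries (1 : ℕ → ℂ) := by
      filter_upwards [(isOpen_lt continuous_const Complex.continuous_re).mem_nhds
        (show (1 : ℝ) < s.re from hs)] with z hz
      exact (LSeries_one_eq_riemannZeta hz).symm
    rw [hEq.iteratedDeriv_eq k, LSeries_iteratedDeriv k hs', ← mul_assoc, ← pow_add]
    rw [Even.neg_one_pow ⟨k, rfl⟩, one_mul]
  -- convolution
  have hconv := (hμsum.LSeriesHasSum).convolution hgsum.LSeriesHasSum
  rw [hμval, hgval] at hconv
  have habc : (riemannZeta s)⁻¹ * ((-1) ^ k * iteratedDeriv k riemannZeta s)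
      = (-1) ^ k * (iteratedDeriv k riemannZeta s / riemannZeta s) := by
    rw [div_eq_mul_inv]; ring
  rw [habc] at hconv
  -- identify the convolution with genVonMangoldt
  have hfun : ∀ n : ℕ, LSeries.term ((fun n => (ArithmeticFunction.moebius n : ℂ)) ⍟ g) s n
      = (genVonMangoldt k n : ℂ) / (n : ℂ) ^ s := by
    intro n
    rcases eq_or_ne n 0 with rfl | hn
    · rw [LSeries.term_zero]
      simp [genVonMangoldt]
    · rw [LSeries.term_of_ne_zero hn]
      congr 1
      rw [LSeries.convolution_def]
      show (∑ p ∈ n.divisorsAntidiagonal, (ArithmeticFunction.moebius p.1 : ℂ) * g p.2) = _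
      rw [Nat.sum_divisorsAntidiagonal
        (f := fun a b => (ArithmeticFunction.moebius a : ℂ) * g b)]
      rw [genVonMangoldt]
      push_cast
      refine Finset.sum_congr rfl fun d hd => ?_
      rw [hg, logMul_iterate]
  exact funext hfun ▸ hconv
end
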